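/- Let 𝒫 be an imprecise probability tree and Q̄ an upper expectation tree that agree. Then for every situation s and every global variable f: Ω → ℝ̄ that is the pointwise limit of a nondecreasing or of a non-increasing sequence of finitary gambles, Ē_𝒫(f|s) = Ē_Q̄(f|s). -/

import Mathlib

open Filter MeasureTheory Topology
open scoped ENNReal

namespace UEPaper

variable {X : Type} [Fintype X] [Nonempty X] [DecidableEq X]

/-- The set of paths: infinite sequences of states (`ω i` is the `(i+1)`-th state). -/
abbrev Path (X : Type) := ℕ → X

/-- The prefix `ω^k` of length `k` of a path, as a list (a situation). -/
def prefixList (ω : Path X) (k : ℕ) : List X := (List.range k).map ω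

/-- The cylinder event `Γ(s)` of a situation `s`. -/
def cyl (s : List X) : Set (Path X) := {ω | prefixList ω s.length = s}

/-- `f` is `n`-measurable: it depends only on the first `n` states. -/
def NMeas (n : ℕ) (f : Path X → EReal) : Prop :=
  ∀ ω ω' : Path X, prefixList ω n = prefixList ω' n → f ω = f ω'

/-- A gamble: a bounded real-valued global variable. -/
def IsGamble (f : Path X → EReal) : Prop :=
  ∃ B : ℝ, ∀ ω, -(B : EReal) ≤ f ω ∧ f ω ≤ (B : EReal)

/-- A finitary gamble: an `n`-measurable gamble for some `n`. -/
def IsFinGamble (f : Path X → EReal) : Prop :=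
  (∃ n, NMeas n f) ∧ IsGamble f

/-- An upper expectation tree: a coherent upper expectation at each situation. -/
structure UpperExpTree (X : Type) [Fintype X] [Nonempty X] where
  Q : List X → (X → ℝ) → ℝ
  le_sup : ∀ (s : List X) (f : X → ℝ), Q s f ≤ ⨆ x, f x
  subadd : ∀ (s : List X) (f g : X → ℝ), Q s (f + g) ≤ Q s f + Q s g
  pos_homog : ∀ (s : List X) (l : ℝ) (f : X → ℝ), 0 ≤ l → Q s (l • f) = l * Q s f

/-- A (real-valued) supermartingale for the upper expectation tree `Q`. -/
def IsSupermart (Q : UpperExpTree X) (M : List X → ℝ) : Prop :=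
  ∀ s : List X, Q.Q s (fun x => M (s ++ [x])) ≤ M s

/-- The game-theoretic upper expectation of a real-valued variable (used on gambles):
the infimum of `M s` over bounded-below supermartingales `M` with
`liminf_k M(ω^k) ≥ f(ω)` on `Γ(s)`. -/
noncomputable def gtG (Q : UpperExpTree X) (f : Path X → ℝ) (s : List X) : EReal :=
  sInf {a : EReal | ∃ M : List X → ℝ, IsSupermart Q M ∧ (∃ B : ℝ, ∀ t, B ≤ M t) ∧
    (∀ ω ∈ cyl s,
      (f ω : EReal) ≤ Filter.liminf (fun k => ((M (prefixList ω k) : ℝ) : EReal)) atTop) ∧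
    a = ((M s : ℝ) : EReal)}

/-- Extension to bounded-below variables, by continuity w.r.t. upper cuts:
`Ē(f|s) = lim_{c → +∞} Ē(min(f,c)|s)` (the limit of this nondecreasing net is a supremum). -/
noncomputable def gtBB (Q : UpperExpTree X) (f : Path X → EReal) (s : List X) : EReal :=
  ⨆ c : ℝ, gtG Q (fun ω => (f ω ⊓ (c : EReal)).toReal) s

/-- The game-theoretic global upper expectation `Ē_Q̄`, extended to all extended
real variables by continuity w.r.t. lower cuts:
`Ē(f|s) = lim_{c → −∞} Ē(max(f,c)|s)` (the limit of this nonincreasing net is an infimum). -/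
noncomputable def gtUE (Q : UpperExpTree X) (f : Path X → EReal) (s : List X) : EReal :=
  ⨅ c : ℝ, gtBB Q (fun ω => f ω ⊔ (c : EReal)) s

/-- A precise probability tree: a probability mass function at each situation. -/
structure PreciseTree (X : Type) [Fintype X] where
  p : List X → X → ℝ
  nonneg : ∀ (s : List X) (x : X), 0 ≤ p s x
  sum_one : ∀ s : List X, ∑ x, p s x = 1

/-- An imprecise probability tree: a nonempty closed convex set of probability mass
functions at each situation. -/
structure ImpreciseTree (X : Type) [Fintype X] where
  sets : List X → Set (X → ℝ)
  nonempty' : ∀ s : List X, (sets s).Nonempty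
  closed' : ∀ s : List X, IsClosed (sets s)
  convex' : ∀ s : List X, Convex ℝ (sets s)
  prob' : ∀ s : List X, ∀ q ∈ sets s, (∀ x, 0 ≤ q x) ∧ ∑ x, q x = 1

/-- `p ∼ 𝒫`: the precise tree `p` is compatible with the imprecise tree `P`. -/
def Compatible (p : PreciseTree X) (P : ImpreciseTree X) : Prop :=
  ∀ s : List X, p.p s ∈ P.sets s

/-- The probability `P_p(Γ(z)|s)` of the cylinder of `z` conditional on situation `s`. -/
noncomputable def cylProb (p : List X → X → ℝ) (s z : List X) : ℝ :=
  if s.length < z.length ∧ z.take s.length = s then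
    ∏ i ∈ Finset.Ico s.length z.length, p (z.take i) (z.getD i (Classical.arbitrary X))
  else if z.length ≤ s.length ∧ s.take z.length = z then 1 else 0

/-- The σ-algebra `ℱ` on paths generated by the cylinder events. -/
instance cylSigma : MeasurableSpace (Path X) :=
  MeasurableSpace.generateFrom {A | ∃ s : List X, A = cyl s}

/-- `μ` is the probability measure `P_p(·|s)` on `ℱ` determined by the tree `p`. -/
def IsTreeMeasure (p : PreciseTree X) (s : List X) (μ : Measure (Path X)) : Prop :=
  IsProbabilityMeasure μ ∧ ∀ z : List X, μ (cyl z) = ENNReal.ofReal (cylProb p.p s z)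

/-- Positive part of an extended real, in `ℝ≥0∞`. -/
noncomputable def posPart (x : EReal) : ℝ≥0∞ := if x = ⊤ then ⊤ else ENNReal.ofReal x.toReal

/-- The Lebesgue integral `∫ g dμ = ∫ g⁺ dμ − ∫ g⁻ dμ` of an extended-real variable
(well-defined, with value in `(-∞, +∞]`, for bounded-below measurable `g`). -/
noncomputable def integralE (μ : Measure (Path X)) (g : Path X → EReal) : EReal :=
  ((∫⁻ ω, posPart (g ω) ∂μ : ℝ≥0∞) : EReal) - ((∫⁻ ω, posPart (-(g ω)) ∂μ : ℝ≥0∞) : EReal)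

/-- The upper integral `Ē_p(f|s)`: infimum of integrals of bounded-below
`ℱ`-measurable variables dominating `f`. -/
noncomputable def upperInt (μ : Measure (Path X)) (f : Path X → EReal) : EReal :=
  sInf {a : EReal | ∃ g : Path X → EReal, Measurable g ∧ (∃ B : ℝ, ∀ ω, (B : EReal) ≤ g ω) ∧
    (∀ ω, f ω ≤ g ω) ∧ a = integralE μ g}

/-- The measure-theoretic global upper expectation `Ē_𝒫(f|s)`, given the assignment
`Pm` of the measures `P_p(·|s)` to precise trees: the upper envelope of the upper
integrals over all compatible precise trees. -/
noncomputable def muUE (Pm : PreciseTree X → List X → Measure (Path X))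
    (P : ImpreciseTree X) (f : Path X → EReal) (s : List X) : EReal :=
  ⨆ (p : PreciseTree X) (_ : Compatible p P), upperInt (Pm p s) f

/-- The trees `P` and `Q` agree: each `Q̄_s` is the upper envelope of the expectations
corresponding to the credal set `𝒫_s`. -/
def Agree (P : ImpreciseTree X) (Q : UpperExpTree X) : Prop :=
  ∀ (s : List X) (f : X → ℝ),
    Q.Q s f = sSup {r : ℝ | ∃ q ∈ P.sets s, r = ∑ x, f x * q x}

/-- Axioms P1–P5 for a global upper expectation `E` w.r.t. the tree `Q`. -/
structure Axioms (Q : UpperExpTree X) (E : (Path X → EReal) → List X → EReal) : Prop where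
  p1 : ∀ (f : X → ℝ) (s : List X),
    E (fun ω => ((f (ω s.length) : ℝ) : EReal)) s = ((Q.Q s f : ℝ) : EReal)
  p2 : ∀ f : Path X → EReal, IsFinGamble f → ∀ s : List X, E f s = E ((cyl s).indicator f) s
  p3 : ∀ f : Path X → EReal, IsFinGamble f → ∀ s : List X,
    E f s ≤ E (fun ω => E f (prefixList ω (s.length + 1))) s
  p4 : ∀ f g : Path X → EReal, (∀ ω, f ω ≤ g ω) → ∀ s : List X, E f s ≤ E g s
  p5 : ∀ (s : List X) (fn : ℕ → Path X → EReal) (f : Path X → EReal),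
    (∀ n, IsFinGamble (fn n)) → (∃ B : ℝ, ∀ n ω, (B : EReal) ≤ fn n ω) →
    (∀ ω, Tendsto (fun n => fn n ω) atTop (nhds (f ω))) →
    E f s ≤ limsup (fun n => E (fn n) s) atTop

/-- Upper semicontinuity of an extended-real variable on the path space. -/
def USC [TopologicalSpace X] [DiscreteTopology X] (f : Path X → EReal) : Prop :=
  ∀ a : ℝ, IsOpen {ω : Path X | f ω < (a : EReal)}

/-- An `Ω`-capacity (Dellacherie): a monotone `[0,∞]`-valued functional on nonnegative
variables, continuous along nondecreasing sequences, and continuous along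
nonincreasing sequences of nonnegative real-valued upper semicontinuous functions. -/
def IsCapacity [TopologicalSpace X] [DiscreteTopology X]
    (F : (Path X → EReal) → EReal) : Prop :=
  (∀ f : Path X → EReal, (∀ ω, 0 ≤ f ω) → 0 ≤ F f) ∧
  (∀ f g : Path X → EReal, (∀ ω, 0 ≤ f ω) → (∀ ω, 0 ≤ g ω) → (∀ ω, f ω ≤ g ω) → F f ≤ F g) ∧
  (∀ fn : ℕ → Path X → EReal, (∀ n ω, 0 ≤ fn n ω) → Monotone fn →
    Tendsto (fun n => F (fn n)) atTop (nhds (F (fun ω => ⨆ n, fn n ω)))) ∧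
  (∀ fn : ℕ → Path X → EReal, (∀ n ω, 0 ≤ fn n ω ∧ fn n ω < ⊤) → (∀ n, USC (fn n)) →
    Antitone fn →
    Tendsto (fun n => F (fn n)) atTop (nhds (F (fun ω => ⨅ n, fn n ω))))

open Classical in
/-- The metric `δ(ω,ω') = 2^{-n}`, `n` the first (1-based) index where `ω` and `ω'` differ. -/
noncomputable def delta (ω ω' : Path X) : ℝ :=
  if h : ω = ω' then 0
  else (1 / 2 : ℝ) ^ (Nat.find (Function.ne_iff.mp h) + 1)

/-- The product topology on the path space (with `X` discrete). -/
def prodTop (X : Type) : TopologicalSpace (ℕ → X) :=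
  @Pi.topologicalSpace ℕ (fun _ => X) (fun _ => ⊥)

/-! ### Part 1: basic lemmas -/
set_option linter.unusedSectionVars false

section QBasic
variable {Q : UpperExpTree X}

lemma Qzero (t : List X) : Q.Q t 0 = 0 := by
  have h := Q.pos_homog t 0 0 le_rfl
  simpa using h

lemma Qle_bound (t : List X) (g : X → ℝ) {B : ℝ} (h : ∀ x, g x ≤ B) : Q.Q t g ≤ B :=
  (Q.le_sup t g).trans (ciSup_le h)

lemma Qge_bound (t : List X) (g : X → ℝ) {B : ℝ} (h : ∀ x, B ≤ g x) : B ≤ Q.Q t g := by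
  have h0 : Q.Q t (g + (-g)) ≤ Q.Q t g + Q.Q t (-g) := Q.subadd t g (-g)
  have e : g + (-g) = 0 := by funext x; simp
  rw [e, Qzero] at h0
  have h1 : Q.Q t (-g) ≤ -B := Qle_bound t (-g) (fun x => by simpa using h x)
  linarith

lemma Qmono (t : List X) {g h : X → ℝ} (hgh : ∀ x, g x ≤ h x) : Q.Q t g ≤ Q.Q t h := by
  have h0 : Q.Q t (h + (g - h)) ≤ Q.Q t h + Q.Q t (g - h) := Q.subadd t h (g - h)
  have e : h + (g - h) = g := by funext x; simp
  rw [e] at h0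
  have h1 : Q.Q t (g - h) ≤ 0 := Qle_bound t _ (fun x => by simpa [sub_nonpos] using hgh x)
  linarith

lemma Qconst (t : List X) (c : ℝ) : Q.Q t (fun _ => c) = c :=
  le_antisymm (Qle_bound t _ fun _ => le_rfl) (Qge_bound t _ fun _ => le_rfl)

lemma QaddC (t : List X) (g : X → ℝ) (c : ℝ) : Q.Q t (fun x => g x + c) = Q.Q t g + c := by
  have h1 : Q.Q t (fun x => g x + c) ≤ Q.Q t g + c := by
    have h := Q.subadd t g (fun _ => c)
    have e : (g + fun _ => c) = fun x => g x + c := by funext x; simp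
    rw [e, Qconst] at h; exact h
  have h2 : Q.Q t g ≤ Q.Q t (fun x => g x + c) + (-c) := by
    have h := Q.subadd t (fun x => g x + c) (fun _ => -c)
    have e : ((fun x => g x + c) + fun _ => -c) = g := by funext x; simp
    rw [e, Qconst] at h; exact h
  linarith

end QBasic

section PrefixCyl

lemma prefixList_length (ω : Path X) (k : ℕ) : (prefixList ω k).length = k := by
  simp [prefixList]

lemma prefixList_getElem (ω : Path X) {k i : ℕ} (h : i < (prefixList ω k).length) :
    (prefixList ω k)[i] = ω i := by
  simp [prefixList]

lemma prefixList_take (ω : Path X) {m n : ℕ} (h : m ≤ n) :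
    (prefixList ω n).take m = prefixList ω m := by
  apply List.ext_getElem
  · simp [prefixList_length]; omega
  · intro i h1 h2
    simp [prefixList]

lemma prefixList_succ (ω : Path X) (k : ℕ) :
    prefixList ω (k+1) = prefixList ω k ++ [ω k] := by
  simp [prefixList, List.range_succ]

lemma mem_cyl {ω : Path X} {t : List X} : ω ∈ cyl t ↔ prefixList ω t.length = t := Iff.rfl

lemma measurableSet_cyl (t : List X) : MeasurableSet (cyl t : Set (Path X)) :=
  MeasurableSpace.measurableSet_generateFrom ⟨t, rfl⟩

/-- extend a situation to a path, with junk -/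
noncomputable def ext0 (t : List X) : Path X := fun i => t.getD i (Classical.arbitrary X)

lemma prefixList_ext0 {t : List X} {n : ℕ} (h : n ≤ t.length) :
    prefixList (ext0 t) n = t.take n := by
  apply List.ext_getElem
  · simp [prefixList_length]; omega
  · intro i h1 h2
    have hi : i < n := by simpa [prefixList_length] using h1
    have hit : i < t.length := lt_of_lt_of_le hi h
    simp [prefixList, ext0, List.getD_eq_getElem t _ hit, List.getElem?_eq_getElem hit]

lemma prefixList_ext0_self (t : List X) : prefixList (ext0 t) t.length = t := by
  rw [prefixList_ext0 le_rfl, List.take_length]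

end PrefixCyl

section SitSec

def Sit (X : Type) [Fintype X] [DecidableEq X] : ℕ → Finset (List X)
  | 0 => {([] : List X)}
  | n+1 => (Sit X n).biUnion (fun t => Finset.image (fun x => t ++ [x]) Finset.univ)

lemma mem_Sit {n : ℕ} {t : List X} : t ∈ Sit X n ↔ t.length = n := by
  induction n generalizing t with
  | zero => simp [Sit, List.length_eq_zero_iff]
  | succ n ih =>
    simp only [Sit, Finset.mem_biUnion, Finset.mem_image, Finset.mem_univ, true_and]
    constructor
    · rintro ⟨r, hr, x, rfl⟩
      simp [ih.mp hr]
    · intro h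
      have hne : t ≠ [] := by rintro rfl; simp at h
      refine ⟨t.dropLast, ih.mpr (by simp [h]), t.getLast hne, ?_⟩
      simp [List.dropLast_append_getLast hne]

lemma prefixList_mem_Sit (ω : Path X) (n : ℕ) : prefixList ω n ∈ Sit X n :=
  mem_Sit.mpr (prefixList_length ω n)

lemma sum_Sit_succ {M : Type*} [AddCommMonoid M] (n : ℕ) (F : List X → M) :
    ∑ t ∈ Sit X (n+1), F t = ∑ t ∈ Sit X n, ∑ x, F (t ++ [x]) := by
  show ∑ t ∈ (Sit X n).biUnion _, F t = _
  rw [Finset.sum_biUnion]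
  · refine Finset.sum_congr rfl fun t ht => ?_
    rw [Finset.sum_image (by intro a _ b _ h; simpa using h)]
  · intro a ha b hb hab
    simp only [Function.onFun, Finset.disjoint_left]
    rintro z hz1 hz2
    simp only [Finset.mem_image, Finset.mem_univ, true_and] at hz1 hz2
    obtain ⟨x, rfl⟩ := hz1
    obtain ⟨y, hy⟩ := hz2
    apply hab
    have ha' := mem_Sit.mp ha
    have hb' := mem_Sit.mp hb
    have h1 : (a ++ [x]).take n = a := by
      rw [← ha', List.take_append_of_le_length le_rfl, List.take_length]
    have h2 : (b ++ [y]).take n = b := by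
      rw [← hb', List.take_append_of_le_length le_rfl, List.take_length]
    rw [← h1, ← hy, h2]

end SitSec
/-! ### Part 2: cylProb, pval, bval, Mval -/

section CylProb
variable {p : List X → X → ℝ} {s : List X}

lemma cylProb_nonneg (hp : ∀ t x, 0 ≤ p t x) (z : List X) : 0 ≤ cylProb p s z := by
  unfold cylProb
  split_ifs
  · exact Finset.prod_nonneg fun i _ => hp _ _
  · exact zero_le_one
  · exact le_rfl

lemma cylProb_self : cylProb p s s = 1 := by
  unfold cylProb
  rw [if_neg (by simp), if_pos ⟨le_rfl, List.take_length⟩]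

lemma cylProb_eq_prod {z : List X} (hl : s.length ≤ z.length) (hc : z.take s.length = s) :
    cylProb p s z =
      ∏ i ∈ Finset.Ico s.length z.length, p (z.take i) (z.getD i (Classical.arbitrary X)) := by
  rcases lt_or_eq_of_le hl with h | h
  · unfold cylProb; rw [if_pos ⟨h, hc⟩]
  · have hz : z = s := by rw [← hc, h, List.take_length]
    subst hz
    rw [cylProb_self, ← h]
    simp

lemma cylProb_eq_zero {z : List X} (hl : s.length ≤ z.length) (hc : z.take s.length ≠ s) :
    cylProb p s z = 0 := by
  unfold cylProb
  rw [if_neg (by tauto), if_neg]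
  rintro ⟨h1, h2⟩
  have h3 : z.length = s.length := le_antisymm h1 hl
  apply hc
  have hzs : z = s := by rw [h3, List.take_length] at h2; exact h2.symm
  rw [hzs, List.take_length]

lemma cylProb_append {t : List X} (hl : s.length ≤ t.length) (x : X) :
    cylProb p s (t ++ [x]) = cylProb p s t * p t x := by
  have hlen : (t ++ [x]).length = t.length + 1 := by simp
  by_cases hc : t.take s.length = s
  · have hc' : (t ++ [x]).take s.length = s := by
      rw [List.take_append_of_le_length hl]; exact hc
    rw [cylProb_eq_prod (by omega) hc', cylProb_eq_prod hl hc, hlen,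
      Finset.prod_Ico_succ_top hl]
    congr 1
    · apply Finset.prod_congr rfl
      intro i hi
      have hi' : i < t.length := (Finset.mem_Ico.mp hi).2
      rw [List.take_append_of_le_length hi'.le, List.getD_append _ _ _ _ hi']
    · rw [List.take_append_of_le_length le_rfl, List.take_length,
        List.getD_append_right _ _ _ _ le_rfl]
      simp
  · have hc' : (t ++ [x]).take s.length ≠ s := by
      rw [List.take_append_of_le_length hl]; exact hc
    rw [cylProb_eq_zero (by omega) hc', cylProb_eq_zero hl hc, zero_mul]

end CylProb

section Vals

/-- backward recursion for the upper-expectation value of a level-`|t|+m` variable `u` -/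
noncomputable def bval (Q : UpperExpTree X) (u : List X → ℝ) : ℕ → List X → ℝ
  | 0 => u
  | m+1 => fun t => Q.Q t (fun x => bval Q u m (t ++ [x]))

/-- backward recursion for the expectation w.r.t. a precise tree -/
noncomputable def pval (p : List X → X → ℝ) (u : List X → ℝ) : ℕ → List X → ℝ
  | 0 => u
  | m+1 => fun t => ∑ x, p t x * pval p u m (t ++ [x])

/-- the canonical supermartingale associated to the `n`-measurable gamble `ω ↦ u (ω^n)` -/
noncomputable def Mval (Q : UpperExpTree X) (u : List X → ℝ) (n : ℕ) (t : List X) : ℝ :=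
  bval Q (fun r => u (r.take n)) (n - t.length) t

variable {Q : UpperExpTree X}

lemma bval_le_of {u : List X → ℝ} {C : ℝ} (h : ∀ r, u r ≤ C) :
    ∀ (m : ℕ) (t : List X), bval Q u m t ≤ C := by
  intro m
  induction m with
  | zero => exact h
  | succ m ih => exact fun t => Qle_bound t _ (fun x => ih (t ++ [x]))

lemma bval_ge_of {u : List X → ℝ} {B : ℝ} (h : ∀ r, B ≤ u r) :
    ∀ (m : ℕ) (t : List X), B ≤ bval Q u m t := by
  intro m
  induction m with
  | zero => exact h
  | succ m ih => exact fun t => Qge_bound t _ (fun x => ih (t ++ [x]))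

lemma bval_mono {u v : List X → ℝ} (h : ∀ r, u r ≤ v r) :
    ∀ (m : ℕ) (t : List X), bval Q u m t ≤ bval Q v m t := by
  intro m
  induction m with
  | zero => exact h
  | succ m ih => exact fun t => Qmono t (fun x => ih (t ++ [x]))

lemma Mval_of_le {u : List X → ℝ} {n : ℕ} {t : List X} (h : n ≤ t.length) :
    Mval Q u n t = u (t.take n) := by
  rw [Mval, Nat.sub_eq_zero_of_le h]; rfl

lemma Mval_fix (u : List X → ℝ) (n : ℕ) (t : List X) :
    Mval Q u n t = Q.Q t (fun x => Mval Q u n (t ++ [x])) := by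
  by_cases h : t.length < n
  · have e : n - t.length = (n - (t.length + 1)) + 1 := by omega
    rw [Mval, e]
    show Q.Q t _ = _
    congr 1
    funext x
    rw [Mval]
    congr 1
    simp
  · push_neg at h
    rw [Mval_of_le h]
    have e : ∀ x, Mval Q u n (t ++ [x]) = u (t.take n) := by
      intro x
      rw [Mval_of_le (by simp; omega), List.take_append_of_le_length h]
    simp only [e]
    rw [Qconst]

lemma Mval_supermart (u : List X → ℝ) (n : ℕ) : IsSupermart Q (Mval Q u n) :=
  fun t => le_of_eq (Mval_fix u n t).symm

lemma Mval_le_of {u : List X → ℝ} {n : ℕ} {C : ℝ} (h : ∀ r : List X, u (r.take n) ≤ C)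
    (t : List X) : Mval Q u n t ≤ C := bval_le_of h _ t

lemma Mval_ge_of {u : List X → ℝ} {n : ℕ} {B : ℝ} (h : ∀ r : List X, B ≤ u (r.take n))
    (t : List X) : B ≤ Mval Q u n t := bval_ge_of h _ t

/-- monotonicity of canonical supermartingales across different levels -/
lemma Mval_mono_lvl {u v : List X → ℝ} {n m : ℕ}
    (h : ∀ ω : Path X, u (prefixList ω n) ≤ v (prefixList ω m)) :
    ∀ t : List X, Mval Q u n t ≤ Mval Q v m t := by
  have base : ∀ t : List X, n ≤ t.length → m ≤ t.length → Mval Q u n t ≤ Mval Q v m t := by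
    intro t hn hm
    rw [Mval_of_le hn, Mval_of_le hm, ← prefixList_ext0 hn, ← prefixList_ext0 hm]
    exact h (ext0 t)
  suffices H : ∀ (d : ℕ) (t : List X), max n m ≤ t.length + d → Mval Q u n t ≤ Mval Q v m t by
    intro t
    exact H (max n m) t (by omega)
  intro d
  induction d with
  | zero => intro t ht; exact base t (by omega) (by omega)
  | succ d ih =>
    intro t ht
    by_cases hb : max n m ≤ t.length
    · exact base t (by omega) (by omega)
    · rw [Mval_fix (Q := Q) u n t, Mval_fix (Q := Q) v m t]
      exact Qmono t fun x => ih (t ++ [x]) (by simp; omega)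

end Vals
/-! ### Part 3: pval and the agreement between trees -/

section PvalSec
variable {P : ImpreciseTree X} {Q : UpperExpTree X}

lemma sum_mem_le_Q (hagree : Agree P Q) (t : List X) (g : X → ℝ) {q : X → ℝ}
    (hq : q ∈ P.sets t) : ∑ x, g x * q x ≤ Q.Q t g := by
  rw [hagree t g]
  apply le_csSup
  · refine ⟨∑ x, |g x|, ?_⟩
    rintro r ⟨q', hq', rfl⟩
    obtain ⟨hq'0, hq'1⟩ := P.prob' t q' hq'
    refine Finset.sum_le_sum fun x _ => ?_
    have h1 : q' x ≤ 1 := by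
      calc q' x ≤ ∑ y, q' y := Finset.single_le_sum (fun y _ => hq'0 y) (Finset.mem_univ x)
      _ = 1 := hq'1
    calc g x * q' x ≤ |g x| * q' x := by
          apply mul_le_mul_of_nonneg_right (le_abs_self _) (hq'0 x)
    _ ≤ |g x| * 1 := by apply mul_le_mul_of_nonneg_left h1 (abs_nonneg _)
    _ = |g x| := mul_one _
  · exact ⟨q, hq, rfl⟩

lemma exists_near_opt (hagree : Agree P Q) (t : List X) (g : X → ℝ) {ε : ℝ} (hε : 0 < ε) :
    ∃ q, q ∈ P.sets t ∧ Q.Q t g - ε < ∑ x, g x * q x := by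
  have hne : {r : ℝ | ∃ q ∈ P.sets t, r = ∑ x, g x * q x}.Nonempty := by
    obtain ⟨q0, hq0⟩ := P.nonempty' t
    exact ⟨_, q0, hq0, rfl⟩
  have hlt : Q.Q t g - ε < sSup {r : ℝ | ∃ q ∈ P.sets t, r = ∑ x, g x * q x} := by
    rw [← hagree t g]; linarith
  obtain ⟨r, ⟨q, hq, rfl⟩, hr⟩ := exists_lt_of_lt_csSup hne hlt
  exact ⟨q, hq, hr⟩

variable {p : List X → X → ℝ}

lemma pval_mono (hp : ∀ t x, 0 ≤ p t x) {u v : List X → ℝ} (h : ∀ r, u r ≤ v r) :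
    ∀ (m : ℕ) (t : List X), pval p u m t ≤ pval p v m t := by
  intro m
  induction m with
  | zero => exact h
  | succ m ih =>
    intro t
    exact Finset.sum_le_sum fun x _ => mul_le_mul_of_nonneg_left (ih _) (hp t x)

lemma pval_const (hp1 : ∀ t, ∑ x, p t x = 1) (c : ℝ) :
    ∀ (m : ℕ) (t : List X), pval p (fun _ => c) m t = c := by
  intro m
  induction m with
  | zero => intro t; rfl
  | succ m ih =>
    intro t
    show ∑ x, p t x * pval p _ m (t ++ [x]) = c
    simp only [ih]
    rw [← Finset.sum_mul, hp1 t, one_mul]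

lemma pval_le_bval (hagree : Agree P Q) (hq : ∀ t, p t ∈ P.sets t) (u : List X → ℝ) :
    ∀ (m : ℕ) (t : List X), pval p u m t ≤ bval Q u m t := by
  intro m
  induction m with
  | zero => exact fun t => le_rfl
  | succ m ih =>
    intro t
    have h1 : ∑ x, p t x * pval p u m (t ++ [x]) ≤ ∑ x, (bval Q u m (t ++ [x])) * p t x := by
      refine Finset.sum_le_sum fun x _ => ?_
      rw [mul_comm]
      exact mul_le_mul_of_nonneg_right (ih _) ((P.prob' t _ (hq t)).1 x)
    exact h1.trans (sum_mem_le_Q hagree t _ (hq t))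

lemma pval_supermart_le (hagree : Agree P Q) (hq : ∀ t, p t ∈ P.sets t)
    {M : List X → ℝ} (hM : IsSupermart Q M) :
    ∀ (m : ℕ) (t : List X), pval p M m t ≤ M t := by
  intro m
  induction m with
  | zero => exact fun t => le_rfl
  | succ m ih =>
    intro t
    have h1 : ∑ x, p t x * pval p M m (t ++ [x]) ≤ ∑ x, (M (t ++ [x])) * p t x := by
      refine Finset.sum_le_sum fun x _ => ?_
      rw [mul_comm]
      exact mul_le_mul_of_nonneg_right (ih _) ((P.prob' t _ (hq t)).1 x)
    exact h1.trans ((sum_mem_le_Q hagree t _ (hq t)).trans (hM t))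

lemma pval_peel (u : List X → ℝ) :
    ∀ (m : ℕ) (t : List X),
      pval p u (m+1) t = pval p (fun r => ∑ x, p r x * u (r ++ [x])) m t := by
  intro m
  induction m with
  | zero => intro t; rfl
  | succ m ih =>
    intro t
    show ∑ x, p t x * pval p u (m+1) (t ++ [x]) = ∑ x, p t x * pval p _ m (t ++ [x])
    refine Finset.sum_congr rfl fun x _ => ?_
    rw [ih]

lemma pval_pad (hp1 : ∀ t, ∑ x, p t x = 1) (w : List X → ℝ) (n : ℕ) :
    ∀ (m : ℕ) (t : List X), n ≤ t.length + m →
      pval p (fun r => w (r.take n)) (m+1) t = pval p (fun r => w (r.take n)) m t := by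
  intro m
  induction m with
  | zero =>
    intro t ht
    show ∑ x, p t x * w ((t ++ [x]).take n) = w (t.take n)
    have e : ∀ x : X, (t ++ [x]).take n = t.take n := fun x =>
      List.take_append_of_le_length (by simpa using ht)
    simp only [e]
    rw [← Finset.sum_mul, hp1 t, one_mul]
  | succ m ih =>
    intro t ht
    show ∑ x, p t x * pval p _ (m+1) (t ++ [x]) = ∑ x, p t x * pval p _ m (t ++ [x])
    refine Finset.sum_congr rfl fun x _ => ?_
    rw [ih (t ++ [x]) (by simp; omega)]

/-- the fundamental sum formula for expectations of finitary variables -/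
lemma sum_cylProb_mul (s : List X) (m : ℕ) (u : List X → ℝ) :
    ∑ t ∈ Sit X (s.length + m), cylProb p s t * u t = pval p u m s := by
  induction m generalizing u with
  | zero =>
    rw [Finset.sum_eq_single s]
    · rw [cylProb_self, one_mul]; rfl
    · intro t ht hts
      have hlen : t.length = s.length := by simpa using mem_Sit.mp ht
      have hc : t.take s.length ≠ s := by
        rw [← hlen, List.take_length]; exact hts
      rw [cylProb_eq_zero hlen.ge hc, zero_mul]
    · intro hs
      exact absurd (mem_Sit.mpr (by simp)) hs
  | succ m ih =>
    have e : s.length + (m + 1) = (s.length + m) + 1 := by omega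
    rw [e, sum_Sit_succ, pval_peel]
    rw [← ih]
    refine Finset.sum_congr rfl fun t ht => ?_
    have hlt : s.length ≤ t.length := by
      have := mem_Sit.mp ht; omega
    rw [Finset.mul_sum]
    refine Finset.sum_congr rfl fun x _ => ?_
    rw [cylProb_append hlt]
    ring

/-- construction of a near-optimal compatible precise tree -/
lemma exists_nearopt_tree (hagree : Agree P Q) (s : List X) (u : List X → ℝ) (n : ℕ)
    (hs : s.length ≤ n) {ε : ℝ} (hε : 0 < ε) :
    ∃ pt : PreciseTree X, Compatible pt P ∧
      Mval Q u n s ≤ pval pt.p (fun r => u (r.take n)) (n - s.length) s + (n - s.length) * ε := by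
  classical
  let q : List X → X → ℝ := fun t =>
    if h : t.length < n then
      Classical.choose (exists_near_opt hagree t (fun x => Mval Q u n (t ++ [x])) hε)
    else (P.nonempty' t).choose
  have hqmem : ∀ t, q t ∈ P.sets t := by
    intro t
    by_cases h : t.length < n
    · simp only [q, dif_pos h]
      exact (Classical.choose_spec
        (exists_near_opt hagree t (fun x => Mval Q u n (t ++ [x])) hε)).1
    · simp only [q, dif_neg h]
      exact (P.nonempty' t).choose_spec
  refine ⟨⟨q, fun t x => (P.prob' t _ (hqmem t)).1 x, fun t => (P.prob' t _ (hqmem t)).2⟩,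
    fun t => hqmem t, ?_⟩
  show Mval Q u n s ≤ pval q (fun r => u (r.take n)) (n - s.length) s + (n - s.length) * ε
  have key : ∀ (m : ℕ) (t : List X), t.length + m = n →
      bval Q (fun r => u (r.take n)) m t ≤ pval q (fun r => u (r.take n)) m t + m * ε := by
    intro m
    induction m with
    | zero => intro t ht; simp; exact le_rfl
    | succ m ih =>
      intro t ht
      have hlt : t.length < n := by omega
      have hspec := Classical.choose_spec
        (exists_near_opt hagree t (fun x => Mval Q u n (t ++ [x])) hε)
      have hqt : q t = Classical.choose
          (exists_near_opt hagree t (fun x => Mval Q u n (t ++ [x])) hε) := by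
        simp only [q, dif_pos hlt]
      have hMx : ∀ x : X, Mval Q u n (t ++ [x]) = bval Q (fun r => u (r.take n)) m (t ++ [x]) := by
        intro x
        rw [Mval]
        congr 1
        simp; omega
      have h0 : bval Q (fun r => u (r.take n)) (m+1) t
          = Q.Q t (fun x => Mval Q u n (t ++ [x])) := by
        show Q.Q t _ = _
        congr 1
        funext x
        rw [hMx x]
      have h1 : Q.Q t (fun x => Mval Q u n (t ++ [x])) - ε
          < ∑ x, Mval Q u n (t ++ [x]) * q t x := by
        rw [hqt]; exact hspec.2
      have h2 : ∑ x, Mval Q u n (t ++ [x]) * q t x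
          ≤ ∑ x, q t x * (pval q (fun r => u (r.take n)) m (t ++ [x]) + m * ε) := by
        refine Finset.sum_le_sum fun x _ => ?_
        rw [mul_comm]
        refine mul_le_mul_of_nonneg_left ?_ ((P.prob' t _ (hqmem t)).1 x)
        rw [hMx x]
        exact ih (t ++ [x]) (by simp; omega)
      have h3 : ∑ x, q t x * (pval q (fun r => u (r.take n)) m (t ++ [x]) + m * ε)
          = pval q (fun r => u (r.take n)) (m+1) t + m * ε := by
        have hsum1 : ∑ x, q t x = 1 := (P.prob' _ _ (hqmem t)).2
        have e1 : ∀ x ∈ Finset.univ, q t x * (pval q (fun r => u (r.take n)) m (t ++ [x]) + ↑m * ε)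
            = q t x * pval q (fun r => u (r.take n)) m (t ++ [x]) + q t x * (↑m * ε) := by
          intro x _; ring
        rw [Finset.sum_congr rfl e1, Finset.sum_add_distrib, ← Finset.sum_mul, hsum1, one_mul]
        rfl
      have := h0 ▸ (h1.le.trans (h2.trans h3.le))
      push_cast
      linarith
  have hkey := key (n - s.length) s (by omega)
  rw [Nat.cast_sub hs] at hkey
  exact hkey

end PvalSec
/-! ### Part 4: posPart and EReal helpers -/

section PosPartSec

lemma posPart_top : posPart (⊤ : EReal) = ⊤ := by simp [posPart]

lemma posPart_coe (r : ℝ) : posPart ((r : ℝ) : EReal) = ENNReal.ofReal r := by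
  simp [posPart]

lemma posPart_bot : posPart (⊥ : EReal) = 0 := by
  simp [posPart]

lemma posPart_mono : Monotone (posPart : EReal → ℝ≥0∞) := by
  intro x y h
  rcases eq_or_ne y ⊤ with rfl | hy
  · simp [posPart]
  have hx : x ≠ ⊤ := fun hx => hy (top_le_iff.mp (hx ▸ h))
  rw [posPart, if_neg hx, posPart, if_neg hy]
  rcases eq_or_ne x ⊥ with rfl | hxb
  · simp
  · exact ENNReal.ofReal_le_ofReal (EReal.toReal_le_toReal h hxb hy)

lemma posPart_le_const {x : EReal} {C : ℝ} (h : x ≤ (C : EReal)) :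
    posPart x ≤ ENNReal.ofReal C := by
  rw [← posPart_coe]; exact posPart_mono h

lemma measurable_posPart : Measurable (posPart : EReal → ℝ≥0∞) := by
  unfold posPart
  exact Measurable.ite (measurableSet_singleton ⊤) measurable_const
    (ENNReal.measurable_ofReal.comp measurable_ereal_toReal)

lemma coe_ennreal_eq_coe_toReal {x : ℝ≥0∞} (hx : x ≠ ⊤) :
    (x : EReal) = ((x.toReal : ℝ) : EReal) := by
  conv_lhs => rw [← ENNReal.ofReal_toReal hx]
  rw [EReal.coe_ennreal_ofReal, max_eq_left ENNReal.toReal_nonneg]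

lemma ereal_top_of_forall_le {x : EReal} (h : ∀ r : ℝ, (r : EReal) ≤ x) : x = ⊤ := by
  by_contra hx
  obtain ⟨r, hr1, hr2⟩ := EReal.lt_iff_exists_real_btwn.mp (lt_top_iff_ne_top.mpr hx)
  exact absurd (h r) (not_le.mpr hr1)

lemma ereal_le_of_forall_eps {a b : EReal} (h : ∀ ε : ℝ, 0 < ε → a ≤ b + (ε : EReal)) :
    a ≤ b := by
  by_contra hab
  push_neg at hab
  rcases eq_or_ne b ⊥ with rfl | hb
  · have h1 := h 1 one_pos
    rw [EReal.bot_add] at h1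
    exact absurd hab (not_lt.mpr h1)
  rcases eq_or_ne b ⊤ with rfl | bt
  · exact absurd hab (by simp)
  obtain ⟨r, hr1, hr2⟩ := EReal.lt_iff_exists_real_btwn.mp hab
  set br := b.toReal with hbr
  have hbeq : b = (br : EReal) := (EReal.coe_toReal bt hb).symm
  have hεpos : 0 < r - br := by
    have : (br : EReal) < (r : EReal) := hbeq ▸ hr1
    exact sub_pos.mpr (EReal.coe_lt_coe_iff.mp this)
  have h2 := h (r - br) hεpos
  rw [hbeq, ← EReal.coe_add] at h2
  have h3 : a ≤ (r : EReal) := by simpa using h2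
  exact absurd h3 (not_le.mpr hr2)

lemma posPart_iSup {a : ℕ → EReal} (ha : Monotone a) :
    posPart (⨆ n, a n) = ⨆ n, posPart (a n) := by
  apply le_antisymm ?_ (iSup_le fun n => posPart_mono (le_iSup a n))
  set A := ⨆ n, a n with hA
  rcases eq_or_ne A ⊤ with hAt | hAt
  · rw [hAt, posPart_top]
    rcases eq_or_ne (⨆ n, posPart (a n)) ⊤ with hS | hS
    · rw [hS]
    exfalso
    set S := ⨆ n, posPart (a n) with hSdef
    have hub : ∀ n, a n ≤ ((S.toReal : ℝ) : EReal) := by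
      intro n
      rcases eq_or_ne (a n) ⊤ with h1 | h1
      · exfalso
        have hptop : posPart (a n) = ⊤ := by rw [h1, posPart_top]
        have h2 : (⊤ : ℝ≥0∞) ≤ S := hptop ▸ le_iSup (fun n => posPart (a n)) n
        exact hS (top_le_iff.mp h2)
      rcases eq_or_ne (a n) ⊥ with h2 | h2
      · rw [h2]; exact bot_le
      have h3 : posPart (a n) = ENNReal.ofReal (a n).toReal := by rw [posPart, if_neg h1]
      have h4 : ENNReal.ofReal (a n).toReal ≤ S := h3 ▸ le_iSup (fun n => posPart (a n)) n
      have h5 : (a n).toReal ≤ S.toReal := by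
        by_cases hneg : (a n).toReal ≤ 0
        · exact hneg.trans ENNReal.toReal_nonneg
        · push_neg at hneg
          have h6 := ENNReal.toReal_mono hS h4
          rwa [ENNReal.toReal_ofReal hneg.le] at h6
      calc a n = (((a n).toReal : ℝ) : EReal) := (EReal.coe_toReal h1 h2).symm
      _ ≤ ((S.toReal : ℝ) : EReal) := EReal.coe_le_coe_iff.mpr h5
    have hle : A ≤ ((S.toReal : ℝ) : EReal) := iSup_le hub
    rw [hAt] at hle
    exact EReal.coe_ne_top _ (top_le_iff.mp hle)
  rcases eq_or_ne A ⊥ with hAb | hAb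
  · rw [hAb, posPart_bot]
    exact zero_le
  · rw [posPart, if_neg hAt]
    rcases eq_or_ne (⨆ n, posPart (a n)) ⊤ with hS | hS
    · rw [hS]; exact le_top
    apply ENNReal.le_of_forall_pos_le_add
    intro ε hε _
    have hεr : (0 : ℝ) < (ε : ℝ) := hε
    set Ar := A.toReal with hAr
    have hAeq : A = (Ar : EReal) := (EReal.coe_toReal hAt hAb).symm
    have h1 : A - ((ε : ℝ) : EReal) < A := by
      rw [hAeq, ← EReal.coe_sub]
      exact EReal.coe_lt_coe_iff.mpr (by linarith)
    obtain ⟨n, hn⟩ := lt_iSup_iff.mp (hA ▸ h1 : A - ((ε : ℝ) : EReal) < ⨆ n, a n)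
    rw [hAeq, ← EReal.coe_sub] at hn
    have h3 : ENNReal.ofReal (Ar - (ε : ℝ)) ≤ posPart (a n) := by
      rw [← posPart_coe]; exact posPart_mono hn.le
    calc ENNReal.ofReal Ar = ENNReal.ofReal ((Ar - (ε : ℝ)) + (ε : ℝ)) := by ring_nf
    _ ≤ ENNReal.ofReal (Ar - (ε : ℝ)) + ENNReal.ofReal (ε : ℝ) := ENNReal.ofReal_add_le
    _ ≤ (⨆ n, posPart (a n)) + ↑ε := by
          refine add_le_add (h3.trans (le_iSup (fun n => posPart (a n)) n)) ?_
          rw [ENNReal.ofReal_coe_nnreal]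

lemma posPart_iInf {a : ℕ → EReal} (ha : Antitone a) :
    posPart (⨅ n, a n) = ⨅ n, posPart (a n) := by
  apply le_antisymm (le_iInf fun n => posPart_mono (iInf_le a n))
  set A := ⨅ n, a n with hA
  rcases eq_or_ne A ⊤ with hAt | hAt
  · have h0 : ∀ n, a n = ⊤ := fun n => top_le_iff.mp (hAt ▸ iInf_le a n)
    simp [hAt, posPart_top, h0]
  rcases eq_or_ne A ⊥ with hAb | hAb
  · rw [hAb, posPart_bot]
    have h1 : A < ((-1 : ℝ) : EReal) := hAb ▸ EReal.bot_lt_coe _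
    obtain ⟨n, hn⟩ := iInf_lt_iff.mp (hA ▸ h1 : (⨅ n, a n) < ((-1 : ℝ) : EReal))
    have h2 : posPart (a n) ≤ ENNReal.ofReal (-1) := posPart_le_const hn.le
    have h4 : ENNReal.ofReal (-1) = 0 := by simp
    rw [h4] at h2
    exact le_trans (iInf_le _ n) h2
  · rw [posPart, if_neg hAt]
    apply ENNReal.le_of_forall_pos_le_add
    intro ε hε _
    have hεr : (0 : ℝ) < (ε : ℝ) := hε
    set Ar := A.toReal with hAr
    have hAeq : A = (Ar : EReal) := (EReal.coe_toReal hAt hAb).symm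
    have h1 : A < A + ((ε : ℝ) : EReal) := by
      nth_rewrite 1 [hAeq]
      rw [hAeq, ← EReal.coe_add]
      exact EReal.coe_lt_coe_iff.mpr (by linarith)
    obtain ⟨n, hn⟩ := iInf_lt_iff.mp (hA ▸ h1 : (⨅ n, a n) < A + ((ε : ℝ) : EReal))
    rw [hAeq, ← EReal.coe_add] at hn
    have h3 : posPart (a n) ≤ ENNReal.ofReal (Ar + (ε : ℝ)) := posPart_le_const hn.le
    calc ⨅ n, posPart (a n) ≤ posPart (a n) := iInf_le _ n
    _ ≤ ENNReal.ofReal (Ar + (ε : ℝ)) := h3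
    _ ≤ ENNReal.ofReal Ar + ENNReal.ofReal (ε : ℝ) := ENNReal.ofReal_add_le
    _ = ENNReal.ofReal Ar + ↑ε := by rw [ENNReal.ofReal_coe_nnreal]

lemma ereal_neg_iSup {ι : Sort*} (f : ι → EReal) : -(⨆ n, f n) = ⨅ n, -(f n) := by
  apply le_antisymm
  · exact le_iInf fun n => EReal.neg_le_neg_iff.mpr (le_iSup f n)
  · have h : (⨆ n, f n) ≤ -(⨅ n, -(f n)) := by
      apply iSup_le fun n => ?_
      rw [← neg_neg (f n)]
      exact EReal.neg_le_neg_iff.mpr (iInf_le _ n)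
    rw [← neg_neg (⨅ n, -(f n))]
    exact EReal.neg_le_neg_iff.mpr h

lemma ereal_neg_iInf {ι : Sort*} (f : ι → EReal) : -(⨅ n, f n) = ⨆ n, -(f n) := by
  rw [← neg_neg (⨆ n, -(f n)), ereal_neg_iSup]
  simp

lemma ereal_limsup_neg (a : ℕ → EReal) :
    limsup (fun k => -(a k)) atTop = -(liminf a atTop) := by
  rw [liminf_eq_iSup_iInf_of_nat, limsup_eq_iInf_iSup_of_nat, ereal_neg_iSup]
  congr 1
  funext n
  rw [ereal_neg_iInf]
  congr 1
  funext i
  rw [ereal_neg_iInf]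

lemma posPart_liminf_le (a : ℕ → EReal) :
    posPart (liminf a atTop) ≤ liminf (fun n => posPart (a n)) atTop := by
  rw [liminf_eq_iSup_iInf_of_nat, liminf_eq_iSup_iInf_of_nat]
  have hm : Monotone (fun n => ⨅ i, ⨅ (_ : i ≥ n), a i) := by
    intro n m hnm
    apply le_iInf₂
    intro i hi
    exact iInf₂_le (f := fun i (_ : i ≥ n) => a i) i (hnm.trans hi)
  rw [posPart_iSup hm]
  refine iSup_mono fun n => ?_
  apply le_iInf₂
  intro i hi
  exact posPart_mono (iInf₂_le (f := fun i (_ : i ≥ n) => a i) i hi)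

lemma limsup_posPart_le (a : ℕ → EReal) :
    limsup (fun n => posPart (a n)) atTop ≤ posPart (limsup a atTop) := by
  rw [limsup_eq_iInf_iSup_of_nat, limsup_eq_iInf_iSup_of_nat]
  have hm : Antitone (fun n => ⨆ i, ⨆ (_ : i ≥ n), a i) := by
    intro n m hnm
    apply iSup₂_le
    intro i hi
    exact le_iSup₂ (f := fun i (_ : i ≥ n) => a i) i (hnm.trans hi)
  rw [posPart_iInf hm]
  refine iInf_mono fun n => ?_
  apply iSup₂_le
  intro i hi
  exact posPart_mono (le_iSup₂ (f := fun i (_ : i ≥ n) => a i) i hi)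

end PosPartSec
/-! ### Part 5: integrals of finitary variables -/

section IntSec

lemma measurable_fin_comp {β : Type*} [MeasurableSpace β] (g : List X → β) (n : ℕ) :
    Measurable (fun ω : Path X => g (prefixList ω n)) := by
  intro B _
  have he : (fun ω : Path X => g (prefixList ω n)) ⁻¹' B
      = ⋃ (t : List X), ⋃ (_ : t.length = n ∧ g t ∈ B), cyl t := by
    ext ω
    simp only [Set.mem_preimage, Set.mem_iUnion]
    constructor
    · intro hω
      exact ⟨prefixList ω n, ⟨prefixList_length ω n, hω⟩, by
        rw [mem_cyl, prefixList_length]⟩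
    · rintro ⟨t, ⟨hlen, hgB⟩, hcyl⟩
      rw [mem_cyl, hlen] at hcyl
      rwa [hcyl]
  rw [he]
  exact MeasurableSet.iUnion fun t => MeasurableSet.iUnion fun _ => measurableSet_cyl t

lemma lintegral_fin {μ : Measure (Path X)} {p : List X → X → ℝ} {s : List X}
    (hμ : ∀ z : List X, μ (cyl z) = ENNReal.ofReal (cylProb p s z))
    (g : List X → ℝ≥0∞) (n : ℕ) :
    ∫⁻ ω, g (prefixList ω n) ∂μ
      = ∑ t ∈ Sit X n, ENNReal.ofReal (cylProb p s t) * g t := by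
  have hptw : ∀ ω : Path X, g (prefixList ω n)
      = ∑ t ∈ Sit X n, (cyl t).indicator (fun _ => g t) ω := by
    intro ω
    rw [Finset.sum_eq_single (prefixList ω n)]
    · rw [Set.indicator_of_mem]
      rw [mem_cyl, prefixList_length]
    · intro t ht hts
      rw [Set.indicator_of_notMem]
      rw [mem_cyl, mem_Sit.mp ht]
      exact fun hh => hts hh.symm
    · intro hs
      exact absurd (prefixList_mem_Sit ω n) hs
  calc ∫⁻ ω, g (prefixList ω n) ∂μ
      = ∫⁻ ω, ∑ t ∈ Sit X n, (cyl t).indicator (fun _ => g t) ω ∂μ := by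
        congr 1; funext ω; exact hptw ω
  _ = ∑ t ∈ Sit X n, ∫⁻ ω, (cyl t).indicator (fun _ => g t) ω ∂μ :=
        lintegral_finset_sum _ (fun t _ => (measurable_const.indicator (measurableSet_cyl t)))
  _ = ∑ t ∈ Sit X n, ENNReal.ofReal (cylProb p s t) * g t := by
        refine Finset.sum_congr rfl fun t _ => ?_
        rw [lintegral_indicator (measurableSet_cyl t), setLIntegral_const, hμ t, mul_comm]

lemma ofReal_mul_eq (cp u : ℝ) (hcp : 0 ≤ cp) :
    ENNReal.ofReal cp * ENNReal.ofReal u = ENNReal.ofReal (cp * max u 0) := by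
  rcases le_total u 0 with h | h
  · rw [ENNReal.ofReal_of_nonpos h, mul_zero, max_eq_right h, mul_zero, ENNReal.ofReal_zero]
  · rw [max_eq_left h, ENNReal.ofReal_mul hcp]

/-- the two halves of the integral of a finitary variable -/
lemma lintegral_fin_pos {μ : Measure (Path X)} {p : List X → X → ℝ} {s : List X}
    (hp : ∀ t x, 0 ≤ p t x)
    (hμ : ∀ z : List X, μ (cyl z) = ENNReal.ofReal (cylProb p s z))
    (u : List X → ℝ) (n : ℕ) :
    ∫⁻ ω, posPart ((u (prefixList ω n) : ℝ) : EReal) ∂μ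
      = ENNReal.ofReal (∑ t ∈ Sit X n, cylProb p s t * max (u t) 0) := by
  have h1 : ∀ ω : Path X, posPart ((u (prefixList ω n) : ℝ) : EReal)
      = (fun t => ENNReal.ofReal (u t)) (prefixList ω n) := fun ω => posPart_coe _
  calc ∫⁻ ω, posPart ((u (prefixList ω n) : ℝ) : EReal) ∂μ
      = ∫⁻ ω, (fun t => ENNReal.ofReal (u t)) (prefixList ω n) ∂μ := lintegral_congr h1
  _ = ∑ t ∈ Sit X n, ENNReal.ofReal (cylProb p s t) * ENNReal.ofReal (u t) := by
        have h2 := lintegral_fin hμ (fun t => ENNReal.ofReal (u t)) n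
        simpa using h2
  _ = ∑ t ∈ Sit X n, ENNReal.ofReal (cylProb p s t * max (u t) 0) := by
        exact Finset.sum_congr rfl fun t _ => ofReal_mul_eq _ _ (cylProb_nonneg hp t)
  _ = ENNReal.ofReal (∑ t ∈ Sit X n, cylProb p s t * max (u t) 0) := by
        rw [ENNReal.ofReal_sum_of_nonneg]
        intro t _
        exact mul_nonneg (cylProb_nonneg hp t) (le_max_right _ _)

/-- integral formula for finitary real variables -/
lemma integralE_fin {μ : Measure (Path X)} {p : List X → X → ℝ} {s : List X}
    (hp : ∀ t x, 0 ≤ p t x)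
    (hμ : ∀ z : List X, μ (cyl z) = ENNReal.ofReal (cylProb p s z))
    (u : List X → ℝ) (n : ℕ) :
    integralE μ (fun ω => ((u (prefixList ω n) : ℝ) : EReal))
      = ((∑ t ∈ Sit X n, cylProb p s t * u t : ℝ) : EReal) := by
  have e2 : ∫⁻ ω, posPart (-(((u (prefixList ω n) : ℝ) : EReal))) ∂μ
      = ENNReal.ofReal (∑ t ∈ Sit X n, cylProb p s t * max (-u t) 0) := by
    have e3 : ∀ ω : Path X, posPart (-(((u (prefixList ω n) : ℝ) : EReal)))
        = posPart ((((fun t => -u t) (prefixList ω n) : ℝ)) : EReal) := by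
      intro ω; rw [← EReal.coe_neg]
    rw [lintegral_congr e3, lintegral_fin_pos hp hμ (fun t => -u t) n]
  rw [integralE, lintegral_fin_pos hp hμ u n, e2]
  rw [EReal.coe_ennreal_ofReal, EReal.coe_ennreal_ofReal]
  have hP : (0:ℝ) ≤ ∑ t ∈ Sit X n, cylProb p s t * max (u t) 0 :=
    Finset.sum_nonneg fun t _ => mul_nonneg (cylProb_nonneg hp t) (le_max_right _ _)
  have hN : (0:ℝ) ≤ ∑ t ∈ Sit X n, cylProb p s t * max (-u t) 0 :=
    Finset.sum_nonneg fun t _ => mul_nonneg (cylProb_nonneg hp t) (le_max_right _ _)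
  rw [max_eq_left hP, max_eq_left hN, ← EReal.coe_sub]
  congr 1
  rw [← Finset.sum_sub_distrib]
  refine Finset.sum_congr rfl fun t _ => ?_
  have hmx : max (u t) 0 - max (-u t) 0 = u t := by
    rcases le_total (u t) 0 with h | h
    · rw [max_eq_right h, max_eq_left (by linarith)]; ring
    · rw [max_eq_left h, max_eq_right (by linarith)]; ring
  rw [← mul_sub, hmx]

lemma integralE_mono {μ : Measure (Path X)} {g₁ g₂ : Path X → EReal}
    (h : ∀ ω, g₁ ω ≤ g₂ ω) : integralE μ g₁ ≤ integralE μ g₂ := by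
  rw [integralE, integralE]
  apply EReal.sub_le_sub
  · exact EReal.coe_ennreal_le_coe_ennreal_iff.mpr
      (lintegral_mono fun ω => posPart_mono (h ω))
  · exact EReal.coe_ennreal_le_coe_ennreal_iff.mpr
      (lintegral_mono fun ω => posPart_mono (EReal.neg_le_neg_iff.mpr (h ω)))

lemma upperInt_le_integralE {μ : Measure (Path X)} {f g : Path X → EReal}
    (hg : Measurable g) (B : ℝ) (hB : ∀ ω, (B : EReal) ≤ g ω) (hfg : ∀ ω, f ω ≤ g ω) :
    upperInt μ f ≤ integralE μ g :=
  sInf_le ⟨g, hg, ⟨B, hB⟩, hfg, rfl⟩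

lemma upperInt_eq_integralE {μ : Measure (Path X)} {f : Path X → EReal}
    (hf : Measurable f) (B : ℝ) (hB : ∀ ω, (B : EReal) ≤ f ω) :
    upperInt μ f = integralE μ f := by
  refine le_antisymm (upperInt_le_integralE hf B hB (fun _ => le_rfl)) ?_
  apply le_sInf
  rintro a ⟨g, hg, hb, hfg, rfl⟩
  exact integralE_mono hfg

lemma upperInt_mono {μ : Measure (Path X)} {f₁ f₂ : Path X → EReal}
    (h : ∀ ω, f₁ ω ≤ f₂ ω) : upperInt μ f₁ ≤ upperInt μ f₂ := by
  apply sInf_le_sInf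
  rintro a ⟨g, hg, hb, hfg, rfl⟩
  exact ⟨g, hg, hb, fun ω => (h ω).trans (hfg ω), rfl⟩

lemma upperInt_cuts {μ : Measure (Path X)} {f : Path X → EReal} (hf : Measurable f) :
    upperInt μ f = ⨅ c : ℝ, integralE μ (fun ω => f ω ⊔ (c : EReal)) := by
  apply le_antisymm
  · apply le_iInf
    intro c
    refine sInf_le ⟨fun ω => f ω ⊔ (c : EReal), ?_, ⟨c, fun ω => le_sup_right⟩,
      fun ω => le_sup_left, rfl⟩
    exact hf.sup measurable_const
  · apply le_sInf
    rintro a ⟨g, hg, ⟨B, hB⟩, hfg, rfl⟩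
    exact le_trans (iInf_le _ B) (integralE_mono fun ω => sup_le (hfg ω) (hB ω))

end IntSec
/-! ### Part 6: monotone convergence for integralE -/

section MCTSec

lemma coe_ennreal_mono {a b : ℝ≥0∞} (h : a ≤ b) : (a : EReal) ≤ (b : EReal) :=
  EReal.coe_ennreal_le_coe_ennreal_iff.mpr h

lemma ereal_sub_iSup (Pn Nn : ℕ → ℝ≥0∞) (hP : Monotone Pn) (hN : Antitone Nn)
    (hNfin : Nn 0 ≠ ⊤) :
    ((⨆ n, Pn n : ℝ≥0∞) : EReal) - ((⨅ n, Nn n : ℝ≥0∞) : EReal)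
      = ⨆ n, (((Pn n : ℝ≥0∞) : EReal) - ((Nn n : ℝ≥0∞) : EReal)) := by
  have hNn : ∀ n, Nn n ≠ ⊤ := fun n h =>
    hNfin (top_le_iff.mp (h ▸ hN (Nat.zero_le n)))
  have hNinf : (⨅ n, Nn n) ≠ ⊤ := fun h => hNn 0 (top_le_iff.mp (h ▸ iInf_le Nn 0))
  apply le_antisymm ?_ (iSup_le fun n =>
    EReal.sub_le_sub (coe_ennreal_mono (le_iSup Pn n)) (coe_ennreal_mono (iInf_le Nn n)))
  rcases eq_or_ne (⨆ n, Pn n) ⊤ with hPt | hPt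
  · rw [hPt, coe_ennreal_eq_coe_toReal hNinf, EReal.coe_ennreal_top, EReal.top_sub_coe]
    rw [top_le_iff]
    apply ereal_top_of_forall_le
    intro r
    set c := (Nn 0).toReal with hc
    have hK : ENNReal.ofReal (r + c) < ⨆ n, Pn n := by
      rw [hPt]; exact ENNReal.ofReal_lt_top
    obtain ⟨n, hn⟩ := lt_iSup_iff.mp hK
    refine le_trans ?_ (le_iSup (fun n => ((Pn n : ℝ≥0∞) : EReal) - ((Nn n : ℝ≥0∞) : EReal)) n)
    have h1 : ((r + c : ℝ) : EReal) ≤ ((Pn n : ℝ≥0∞) : EReal) := by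
      refine le_trans ?_ (coe_ennreal_mono hn.le)
      rw [EReal.coe_ennreal_ofReal]
      exact EReal.coe_le_coe_iff.mpr (le_max_left _ _)
    have h2 : ((Nn n : ℝ≥0∞) : EReal) ≤ ((c : ℝ) : EReal) := by
      rw [coe_ennreal_eq_coe_toReal (hNn n)]
      exact EReal.coe_le_coe_iff.mpr (ENNReal.toReal_mono hNfin (hN (Nat.zero_le n)))
    calc (r : EReal) = ((r + c : ℝ) : EReal) - ((c : ℝ) : EReal) := by
          rw [← EReal.coe_sub]; ring_nf
    _ ≤ ((Pn n : ℝ≥0∞) : EReal) - ((Nn n : ℝ≥0∞) : EReal) := EReal.sub_le_sub h1 h2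
  · have hPn : ∀ n, Pn n ≠ ⊤ := fun n h =>
      hPt (top_le_iff.mp (h ▸ le_iSup Pn n))
    apply ereal_le_of_forall_eps
    intro ε hε
    have hε2 : (0:ℝ) < ε / 2 := by linarith
    have hεne : ENNReal.ofReal (ε / 2) ≠ 0 := (ENNReal.ofReal_pos.mpr hε2).ne'
    obtain ⟨n1, hn1⟩ : ∃ n1, (⨆ n, Pn n) ≤ Pn n1 + ENNReal.ofReal (ε / 2) := by
      rcases eq_or_ne (⨆ n, Pn n) 0 with h0 | h0
      · exact ⟨0, by rw [h0]; exact zero_le⟩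
      · have hlt : (⨆ n, Pn n) - ENNReal.ofReal (ε / 2) < ⨆ n, Pn n :=
          ENNReal.sub_lt_self hPt h0 hεne
        obtain ⟨n1, hn1⟩ := lt_iSup_iff.mp hlt
        exact ⟨n1, tsub_le_iff_right.mp hn1.le⟩
    obtain ⟨n2, hn2⟩ : ∃ n2, Nn n2 < (⨅ n, Nn n) + ENNReal.ofReal (ε / 2) :=
      iInf_lt_iff.mp (ENNReal.lt_add_right hNinf hεne)
    set n := max n1 n2 with hn
    have h1 : (⨆ m, Pn m) ≤ Pn n + ENNReal.ofReal (ε / 2) :=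
      hn1.trans (add_le_add (hP (le_max_left n1 n2)) le_rfl)
    have h2 : Nn n ≤ (⨅ m, Nn m) + ENNReal.ofReal (ε / 2) :=
      (hN (le_max_right n1 n2)).trans hn2.le
    have hp1 : (⨆ m, Pn m).toReal ≤ (Pn n).toReal + ε / 2 := by
      have := ENNReal.toReal_mono (by
        exact ENNReal.add_ne_top.mpr ⟨hPn n, ENNReal.ofReal_ne_top⟩) h1
      rwa [ENNReal.toReal_add (hPn n) ENNReal.ofReal_ne_top,
        ENNReal.toReal_ofReal hε2.le] at this
    have hp2 : (Nn n).toReal ≤ (⨅ m, Nn m).toReal + ε / 2 := by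
      have := ENNReal.toReal_mono (by
        exact ENNReal.add_ne_top.mpr ⟨hNinf, ENNReal.ofReal_ne_top⟩) h2
      rwa [ENNReal.toReal_add hNinf ENNReal.ofReal_ne_top,
        ENNReal.toReal_ofReal hε2.le] at this
    rw [coe_ennreal_eq_coe_toReal hPt, coe_ennreal_eq_coe_toReal hNinf, ← EReal.coe_sub]
    have hterm : (((Pn n : ℝ≥0∞) : EReal) - ((Nn n : ℝ≥0∞) : EReal))
        ≤ ⨆ m, (((Pn m : ℝ≥0∞) : EReal) - ((Nn m : ℝ≥0∞) : EReal)) :=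
      le_iSup (fun m => (((Pn m : ℝ≥0∞) : EReal) - ((Nn m : ℝ≥0∞) : EReal))) n
    rw [coe_ennreal_eq_coe_toReal (hPn n), coe_ennreal_eq_coe_toReal (hNn n),
      ← EReal.coe_sub] at hterm
    calc (((⨆ m, Pn m).toReal - (⨅ m, Nn m).toReal : ℝ) : EReal)
        ≤ (((Pn n).toReal - (Nn n).toReal + ε : ℝ) : EReal) := by
          apply EReal.coe_le_coe_iff.mpr; linarith
    _ = (((Pn n).toReal - (Nn n).toReal : ℝ) : EReal) + (ε : EReal) := by
          rw [← EReal.coe_add]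
    _ ≤ (⨆ m, (((Pn m : ℝ≥0∞) : EReal) - ((Nn m : ℝ≥0∞) : EReal))) + (ε : EReal) :=
          add_le_add hterm le_rfl

lemma ereal_sub_iInf (Pn Nn : ℕ → ℝ≥0∞) (hP : Antitone Pn) (hN : Monotone Nn)
    (hPfin : Pn 0 ≠ ⊤) {C : ℝ≥0∞} (hC : C ≠ ⊤) (hNC : ∀ n, Nn n ≤ C) :
    ((⨅ n, Pn n : ℝ≥0∞) : EReal) - ((⨆ n, Nn n : ℝ≥0∞) : EReal)
      = ⨅ n, (((Pn n : ℝ≥0∞) : EReal) - ((Nn n : ℝ≥0∞) : EReal)) := by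
  have hPn : ∀ n, Pn n ≠ ⊤ := fun n h =>
    hPfin (top_le_iff.mp (h ▸ hP (Nat.zero_le n)))
  have hPinf : (⨅ n, Pn n) ≠ ⊤ := fun h => hPn 0 (top_le_iff.mp (h ▸ iInf_le Pn 0))
  have hNn : ∀ n, Nn n ≠ ⊤ := fun n h => hC (top_le_iff.mp (h ▸ hNC n))
  have hNsup : (⨆ n, Nn n) ≠ ⊤ := fun h =>
    hC (top_le_iff.mp (h ▸ iSup_le hNC))
  apply le_antisymm (le_iInf fun n =>
    EReal.sub_le_sub (coe_ennreal_mono (iInf_le Pn n)) (coe_ennreal_mono (le_iSup Nn n)))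
  apply ereal_le_of_forall_eps
  intro ε hε
  have hε2 : (0:ℝ) < ε / 2 := by linarith
  have hεne : ENNReal.ofReal (ε / 2) ≠ 0 := (ENNReal.ofReal_pos.mpr hε2).ne'
  obtain ⟨n1, hn1⟩ : ∃ n1, Pn n1 < (⨅ n, Pn n) + ENNReal.ofReal (ε / 2) :=
    iInf_lt_iff.mp (ENNReal.lt_add_right hPinf hεne)
  obtain ⟨n2, hn2⟩ : ∃ n2, (⨆ n, Nn n) ≤ Nn n2 + ENNReal.ofReal (ε / 2) := by
    rcases eq_or_ne (⨆ n, Nn n) 0 with h0 | h0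
    · exact ⟨0, by rw [h0]; exact zero_le⟩
    · have hlt : (⨆ n, Nn n) - ENNReal.ofReal (ε / 2) < ⨆ n, Nn n :=
        ENNReal.sub_lt_self hNsup h0 hεne
      obtain ⟨n2, hn2⟩ := lt_iSup_iff.mp hlt
      exact ⟨n2, tsub_le_iff_right.mp hn2.le⟩
  set n := max n1 n2 with hn
  have h1 : Pn n ≤ (⨅ m, Pn m) + ENNReal.ofReal (ε / 2) :=
    (hP (le_max_left n1 n2)).trans hn1.le
  have h2 : (⨆ m, Nn m) ≤ Nn n + ENNReal.ofReal (ε / 2) :=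
    hn2.trans (add_le_add (hN (le_max_right n1 n2)) le_rfl)
  have hp1 : (Pn n).toReal ≤ (⨅ m, Pn m).toReal + ε / 2 := by
    have := ENNReal.toReal_mono
      (ENNReal.add_ne_top.mpr ⟨hPinf, ENNReal.ofReal_ne_top⟩) h1
    rwa [ENNReal.toReal_add hPinf ENNReal.ofReal_ne_top,
      ENNReal.toReal_ofReal hε2.le] at this
  have hp2 : (⨆ m, Nn m).toReal ≤ (Nn n).toReal + ε / 2 := by
    have := ENNReal.toReal_mono
      (ENNReal.add_ne_top.mpr ⟨hNn n, ENNReal.ofReal_ne_top⟩) h2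
    rwa [ENNReal.toReal_add (hNn n) ENNReal.ofReal_ne_top,
      ENNReal.toReal_ofReal hε2.le] at this
  have hterm : (⨅ m, (((Pn m : ℝ≥0∞) : EReal) - ((Nn m : ℝ≥0∞) : EReal)))
      ≤ (((Pn n : ℝ≥0∞) : EReal) - ((Nn n : ℝ≥0∞) : EReal)) :=
    iInf_le (fun m => (((Pn m : ℝ≥0∞) : EReal) - ((Nn m : ℝ≥0∞) : EReal))) n
  rw [coe_ennreal_eq_coe_toReal (hPn n), coe_ennreal_eq_coe_toReal (hNn n),
    ← EReal.coe_sub] at hterm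
  rw [coe_ennreal_eq_coe_toReal hPinf, coe_ennreal_eq_coe_toReal hNsup, ← EReal.coe_sub]
  calc (⨅ m, (((Pn m : ℝ≥0∞) : EReal) - ((Nn m : ℝ≥0∞) : EReal)))
      ≤ (((Pn n).toReal - (Nn n).toReal : ℝ) : EReal) := hterm
  _ ≤ (((⨅ m, Pn m).toReal - (⨆ m, Nn m).toReal : ℝ) : EReal) + (ε : EReal) := by
      rw [← EReal.coe_add]
      apply EReal.coe_le_coe_iff.mpr
      linarith

lemma integralE_iSup {μ : Measure (Path X)} [IsProbabilityMeasure μ]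
    {h : ℕ → Path X → EReal} (hm : ∀ n, Measurable (h n))
    (hmono : ∀ n ω, h n ω ≤ h (n+1) ω) {B : ℝ} (hB : ∀ n ω, (B : EReal) ≤ h n ω) :
    integralE μ (fun ω => ⨆ n, h n ω) = ⨆ n, integralE μ (h n) := by
  have hmono' : ∀ ω, Monotone (fun n => h n ω) := fun ω =>
    monotone_nat_of_le_succ (fun n => hmono n ω)
  have hPmeas : ∀ n, Measurable (fun ω => posPart (h n ω)) := fun n =>
    measurable_posPart.comp (hm n)
  have hNmeas : ∀ n, Measurable (fun ω => posPart (-(h n ω))) := fun n =>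
    measurable_posPart.comp (measurable_neg.comp (hm n))
  have hNbound : ∀ n (ω : Path X), posPart (-(h n ω)) ≤ ENNReal.ofReal (-B) := by
    intro n ω
    apply posPart_le_const
    rw [show ((-B : ℝ) : EReal) = -((B : ℝ) : EReal) from EReal.coe_neg B]
    exact EReal.neg_le_neg_iff.mpr (hB n ω)
  have hNfin : ∀ n, ∫⁻ ω, posPart (-(h n ω)) ∂μ ≠ ⊤ := by
    intro n
    have hle : ∫⁻ ω, posPart (-(h n ω)) ∂μ ≤ ENNReal.ofReal (-B) := by
      calc ∫⁻ ω, posPart (-(h n ω)) ∂μ ≤ ∫⁻ _, ENNReal.ofReal (-B) ∂μ :=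
            lintegral_mono (hNbound n)
      _ = ENNReal.ofReal (-B) * μ Set.univ := lintegral_const _
      _ = ENNReal.ofReal (-B) := by rw [measure_univ, mul_one]
    exact fun hh => ENNReal.ofReal_ne_top (top_le_iff.mp (hh ▸ hle))
  have hP : ∫⁻ ω, posPart (⨆ n, h n ω) ∂μ = ⨆ n, ∫⁻ ω, posPart (h n ω) ∂μ := by
    rw [lintegral_congr (fun ω => posPart_iSup (hmono' ω))]
    exact lintegral_iSup hPmeas
      (fun n m hnm ω => posPart_mono (hmono' ω hnm))
  have hN : ∫⁻ ω, posPart (-(⨆ n, h n ω)) ∂μ = ⨅ n, ∫⁻ ω, posPart (-(h n ω)) ∂μ := by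
    have e : ∀ ω : Path X, posPart (-(⨆ n, h n ω)) = ⨅ n, posPart (-(h n ω)) := by
      intro ω
      rw [ereal_neg_iSup, posPart_iInf (fun n m hnm => EReal.neg_le_neg_iff.mpr (hmono' ω hnm))]
    rw [lintegral_congr e]
    exact lintegral_iInf hNmeas
      (fun n m hnm ω => posPart_mono (EReal.neg_le_neg_iff.mpr (hmono' ω hnm))) (hNfin 0)
  rw [integralE, hP, hN,
    ereal_sub_iSup _ _ (fun n m hnm => lintegral_mono fun ω => posPart_mono (hmono' ω hnm))
      (fun n m hnm => lintegral_mono fun ω => posPart_mono (EReal.neg_le_neg_iff.mpr (hmono' ω hnm)))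
      (hNfin 0)]
  rfl

lemma integralE_iInf {μ : Measure (Path X)} [IsProbabilityMeasure μ]
    {h : ℕ → Path X → EReal} (hm : ∀ n, Measurable (h n))
    (hanti : ∀ n ω, h (n+1) ω ≤ h n ω) {B C : ℝ} (hB : ∀ n ω, (B : EReal) ≤ h n ω)
    (hC : ∀ n ω, h n ω ≤ (C : EReal)) :
    integralE μ (fun ω => ⨅ n, h n ω) = ⨅ n, integralE μ (h n) := by
  have hanti' : ∀ ω, Antitone (fun n => h n ω) := fun ω =>
    antitone_nat_of_succ_le (fun n => hanti n ω)
  have hPmeas : ∀ n, Measurable (fun ω => posPart (h n ω)) := fun n =>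
    measurable_posPart.comp (hm n)
  have hNmeas : ∀ n, Measurable (fun ω => posPart (-(h n ω))) := fun n =>
    measurable_posPart.comp (measurable_neg.comp (hm n))
  have hPbound : ∀ n (ω : Path X), posPart (h n ω) ≤ ENNReal.ofReal C := fun n ω =>
    posPart_le_const (hC n ω)
  have hNbound : ∀ n (ω : Path X), posPart (-(h n ω)) ≤ ENNReal.ofReal (-B) := by
    intro n ω
    apply posPart_le_const
    rw [show ((-B : ℝ) : EReal) = -((B : ℝ) : EReal) from EReal.coe_neg B]
    exact EReal.neg_le_neg_iff.mpr (hB n ω)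
  have hPfin : ∀ n, ∫⁻ ω, posPart (h n ω) ∂μ ≠ ⊤ := by
    intro n
    have hle : ∫⁻ ω, posPart (h n ω) ∂μ ≤ ENNReal.ofReal C := by
      calc ∫⁻ ω, posPart (h n ω) ∂μ ≤ ∫⁻ _, ENNReal.ofReal C ∂μ := lintegral_mono (hPbound n)
      _ = ENNReal.ofReal C * μ Set.univ := lintegral_const _
      _ = ENNReal.ofReal C := by rw [measure_univ, mul_one]
    exact fun hh => ENNReal.ofReal_ne_top (top_le_iff.mp (hh ▸ hle))
  have hNle : ∀ n, ∫⁻ ω, posPart (-(h n ω)) ∂μ ≤ ENNReal.ofReal (-B) := by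
    intro n
    calc ∫⁻ ω, posPart (-(h n ω)) ∂μ ≤ ∫⁻ _, ENNReal.ofReal (-B) ∂μ :=
          lintegral_mono (hNbound n)
    _ = ENNReal.ofReal (-B) * μ Set.univ := lintegral_const _
    _ = ENNReal.ofReal (-B) := by rw [measure_univ, mul_one]
  have hP : ∫⁻ ω, posPart (⨅ n, h n ω) ∂μ = ⨅ n, ∫⁻ ω, posPart (h n ω) ∂μ := by
    rw [lintegral_congr (fun ω => posPart_iInf (hanti' ω))]
    exact lintegral_iInf hPmeas
      (fun n m hnm ω => posPart_mono (hanti' ω hnm)) (hPfin 0)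
  have hN : ∫⁻ ω, posPart (-(⨅ n, h n ω)) ∂μ = ⨆ n, ∫⁻ ω, posPart (-(h n ω)) ∂μ := by
    have e : ∀ ω : Path X, posPart (-(⨅ n, h n ω)) = ⨆ n, posPart (-(h n ω)) := by
      intro ω
      rw [ereal_neg_iInf, posPart_iSup (fun n m hnm => EReal.neg_le_neg_iff.mpr (hanti' ω hnm))]
    rw [lintegral_congr e]
    exact lintegral_iSup hNmeas
      (fun n m hnm ω => posPart_mono (EReal.neg_le_neg_iff.mpr (hanti' ω hnm)))
  rw [integralE, hP, hN,
    ereal_sub_iInf _ _ (fun n m hnm => lintegral_mono fun ω => posPart_mono (hanti' ω hnm))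
      (fun n m hnm => lintegral_mono fun ω => posPart_mono (EReal.neg_le_neg_iff.mpr (hanti' ω hnm)))
      (hPfin 0) ENNReal.ofReal_ne_top hNle]
  rfl

end MCTSec
/-! ### Part 7: game-theoretic value of finitary gambles -/

section GameSec
variable {Q : UpperExpTree X}

noncomputable def minx (M : List X → ℝ) (t : List X) : X :=
  (Finset.exists_min_image Finset.univ (fun x => M (t ++ [x]))
    ⟨Classical.arbitrary X, Finset.mem_univ _⟩).choose

lemma minx_le (M : List X → ℝ) (t : List X) (y : X) :
    M (t ++ [minx M t]) ≤ M (t ++ [y]) :=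
  (Finset.exists_min_image Finset.univ (fun x => M (t ++ [x]))
    ⟨Classical.arbitrary X, Finset.mem_univ _⟩).choose_spec.2 y (Finset.mem_univ y)

noncomputable def chain (M : List X → ℝ) (t : List X) : ℕ → List X
  | 0 => t
  | k+1 => chain M t k ++ [minx M (chain M t k)]

lemma chain_length (M : List X → ℝ) (t : List X) :
    ∀ k, (chain M t k).length = t.length + k := by
  intro k
  induction k with
  | zero => rfl
  | succ k ih => show (chain M t k ++ _).length = _; simp [ih]; omega

lemma chain_prefix (M : List X → ℝ) (t : List X) {k k' : ℕ} (h : k ≤ k') :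
    chain M t k <+: chain M t k' := by
  obtain ⟨d, rfl⟩ := Nat.exists_eq_add_of_le h
  clear h
  induction d with
  | zero => exact List.prefix_rfl
  | succ d ih =>
    refine ih.trans ?_
    show chain M t (k + d) <+: chain M t (k + d) ++ _
    exact ⟨_, rfl⟩

noncomputable def gpath (M : List X → ℝ) (t : List X) : Path X :=
  fun i => (chain M t (i+1)).getD i (Classical.arbitrary X)

lemma gpath_prefix (M : List X → ℝ) (t : List X) (k : ℕ) :
    prefixList (gpath M t) (t.length + k) = chain M t k := by
  apply List.ext_getElem (by simp [prefixList_length, chain_length])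
  intro i h1 h2
  rw [prefixList_getElem]
  show (chain M t (i+1)).getD i (Classical.arbitrary X) = (chain M t k)[i]
  have hi1 : i < (chain M t (i+1)).length := by rw [chain_length]; omega
  rw [List.getD_eq_getElem _ _ hi1]
  rcases le_total (i+1) k with h | h
  · exact (chain_prefix M t h).getElem hi1
  · exact ((chain_prefix M t h).getElem h2).symm

lemma chain_dec {M : List X → ℝ} (hM : IsSupermart Q M) (t : List X) (k : ℕ) :
    M (chain M t (k+1)) ≤ M (chain M t k) := by
  have h2 : M (chain M t k ++ [minx M (chain M t k)])
      ≤ Q.Q (chain M t k) (fun x => M (chain M t k ++ [x])) :=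
    Qge_bound _ _ (minx_le M (chain M t k))
  exact h2.trans (hM _)

lemma chain_le {M : List X → ℝ} (hM : IsSupermart Q M) (t : List X) :
    ∀ k, M (chain M t k) ≤ M t := by
  intro k
  induction k with
  | zero => exact le_rfl
  | succ k ih => exact (chain_dec hM t k).trans ih

lemma witness_ge {M : List X → ℝ} (hM : IsSupermart Q M)
    {s : List X} {u : List X → ℝ} {n : ℕ} (hsn : s.length ≤ n)
    (hliminf : ∀ ω ∈ cyl s, ((u (prefixList ω n) : ℝ) : EReal) ≤
      Filter.liminf (fun k => ((M (prefixList ω k) : ℝ) : EReal)) atTop) :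
    Mval Q u n s ≤ M s := by
  have claimA : ∀ t : List X, s <+: t → n ≤ t.length → u (t.take n) ≤ M t := by
    intro t hst hn
    have hts : t.take s.length = s := (List.prefix_iff_eq_take.mp hst).symm
    have hsl : s.length ≤ t.length := hst.length_le
    set ω := gpath M t with hω
    have h0 : prefixList ω t.length = t := by
      have := gpath_prefix M t 0
      simpa [chain] using this
    have hωcyl : ω ∈ cyl s := by
      rw [mem_cyl, ← prefixList_take ω hsl, h0, hts]
    have hωn : prefixList ω n = t.take n := by
      rw [← prefixList_take ω hn, h0]
    have hlim := hliminf ω hωcyl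
    rw [hωn] at hlim
    have hliminf_le : Filter.liminf (fun k => ((M (prefixList ω k) : ℝ) : EReal)) atTop
        ≤ ((M t : ℝ) : EReal) := by
      apply liminf_le_of_frequently_le'
      apply Filter.Eventually.frequently
      filter_upwards [eventually_ge_atTop t.length] with k hk
      have hpk : prefixList ω k = chain M t (k - t.length) := by
        have h3 := gpath_prefix M t (k - t.length)
        rwa [show t.length + (k - t.length) = k by omega] at h3
      rw [hpk]
      exact EReal.coe_le_coe_iff.mpr (chain_le hM t _)
    exact EReal.coe_le_coe_iff.mp (hlim.trans hliminf_le)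
  have claimB : ∀ (m : ℕ) (t : List X), s <+: t → t.length + m = n →
      bval Q (fun r => u (r.take n)) m t ≤ M t := by
    intro m
    induction m with
    | zero =>
      intro t hst hlen
      exact claimA t hst (by omega)
    | succ m ih =>
      intro t hst hlen
      show Q.Q t (fun x => bval Q (fun r => u (r.take n)) m (t ++ [x])) ≤ M t
      refine le_trans (Qmono t fun x => ih (t ++ [x])
        (hst.trans ⟨[x], rfl⟩) (by simp; omega)) (hM t)
  have := claimB (n - s.length) s List.prefix_rfl (by omega)
  rw [Mval]
  exact this

lemma Mval_le_gtG {u : List X → ℝ} {n : ℕ} {s : List X} (hsn : s.length ≤ n) :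
    ((Mval Q u n s : ℝ) : EReal) ≤ gtG Q (fun ω => u (prefixList ω n)) s := by
  apply le_sInf
  rintro a ⟨M, hM, hB, hlim, rfl⟩
  exact EReal.coe_le_coe_iff.mpr (witness_ge hM hsn hlim)

lemma gtG_le_Mval {u : List X → ℝ} {n : ℕ} {s : List X} (B : ℝ)
    (hb : ∀ r : List X, B ≤ u (r.take n)) :
    gtG Q (fun ω => u (prefixList ω n)) s ≤ ((Mval Q u n s : ℝ) : EReal) := by
  apply sInf_le
  refine ⟨Mval Q u n, Mval_supermart u n, ⟨B, fun t => Mval_ge_of hb t⟩, ?_, rfl⟩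
  intro ω _
  apply le_liminf_of_le (by isBoundedDefault)
  filter_upwards [eventually_ge_atTop n] with k hk
  have h1 : Mval Q u n (prefixList ω k) = u ((prefixList ω k).take n) :=
    Mval_of_le (by rw [prefixList_length]; exact hk)
  rw [h1, prefixList_take ω hk]

lemma gtG_mono {s : List X} {f g : Path X → ℝ} (h : ∀ ω, f ω ≤ g ω) :
    gtG Q f s ≤ gtG Q g s := by
  apply sInf_le_sInf
  rintro a ⟨M, hM, hB, hlim, rfl⟩
  exact ⟨M, hM, hB, fun ω hω => (EReal.coe_le_coe_iff.mpr (h ω)).trans (hlim ω hω), rfl⟩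

end GameSec
/-! ### Part 8: the Fatou inequality: integrals are dominated by supermartingale values -/

section FatouSec
variable {P : ImpreciseTree X} {Q : UpperExpTree X}

lemma fatou_key (hagree : Agree P Q) {pt : PreciseTree X} (hcompat : Compatible pt P)
    {s : List X} {μ : Measure (Path X)} (hprob : IsProbabilityMeasure μ)
    (hμ : ∀ z : List X, μ (cyl z) = ENNReal.ofReal (cylProb pt.p s z))
    {M : List X → ℝ} (hM : IsSupermart Q M) {B₀ : ℝ} (hB : ∀ t, B₀ ≤ M t)
    {h : Path X → ℝ}
    (hdom : ∀ ω ∈ cyl s, ((h ω : ℝ) : EReal) ≤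
      Filter.liminf (fun k => ((M (prefixList ω k) : ℝ) : EReal)) atTop) :
    integralE μ (fun ω => ((h ω : ℝ) : EReal)) ≤ ((M s : ℝ) : EReal) := by
  classical
  set C₀ : ℝ := max (-B₀) 0 with hC₀
  set gl : Path X → EReal :=
    fun ω => Filter.liminf (fun k => ((M (prefixList ω k) : ℝ) : EReal)) atTop with hgl
  set g' : Path X → EReal := fun ω => if ω ∈ cyl s then gl ω else (⊤ : EReal) with hg'
  -- step 1 : bound by the integral of g'
  have step1 : integralE μ (fun ω => ((h ω : ℝ) : EReal)) ≤ integralE μ g' := by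
    apply integralE_mono
    intro ω
    by_cases hω : ω ∈ cyl s
    · rw [hg']; simp only [if_pos hω]; exact hdom ω hω
    · rw [hg']; simp only [if_neg hω]; exact le_top
  -- step 2 : g' agrees a.e. with gl
  have hnull : μ ((cyl s)ᶜ) = 0 := by
    have h1 : μ (cyl s) = 1 := by
      rw [hμ s, cylProb_self, ENNReal.ofReal_one]
    rw [measure_compl (measurableSet_cyl s) (by rw [h1]; exact ENNReal.one_ne_top), h1,
      measure_univ, tsub_self]
  have hae : g' =ᵐ[μ] gl := by
    have hmem : cyl s ∈ ae μ := mem_ae_iff.mpr hnull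
    filter_upwards [hmem] with ω hω
    rw [hg']; simp only [if_pos hω]
  have step2 : integralE μ g' = integralE μ gl := by
    rw [integralE, integralE]
    congr 1
    · congr 1
      apply lintegral_congr_ae
      exact hae.fun_comp posPart
    · congr 1
      apply lintegral_congr_ae
      exact (hae.neg).fun_comp posPart
  -- the finitary sums
  set SP : ℕ → ℝ := fun k => ∑ t ∈ Sit X k, cylProb pt.p s t * max (M t) 0 with hSP
  set SN : ℕ → ℝ := fun k => ∑ t ∈ Sit X k, cylProb pt.p s t * max (-M t) 0 with hSN
  set S : ℕ → ℝ := fun k => ∑ t ∈ Sit X k, cylProb pt.p s t * M t with hS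
  have hSPnn : ∀ k, 0 ≤ SP k := fun k => Finset.sum_nonneg fun t _ =>
    mul_nonneg (cylProb_nonneg pt.nonneg t) (le_max_right _ _)
  have hSNnn : ∀ k, 0 ≤ SN k := fun k => Finset.sum_nonneg fun t _ =>
    mul_nonneg (cylProb_nonneg pt.nonneg t) (le_max_right _ _)
  have hsplit : ∀ k, SP k - SN k = S k := by
    intro k
    rw [hSP, hSN, hS, ← Finset.sum_sub_distrib]
    refine Finset.sum_congr rfl fun t _ => ?_
    have hmx : max (M t) 0 - max (-M t) 0 = M t := by
      rcases le_total (M t) 0 with h1 | h1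
      · rw [max_eq_right h1, max_eq_left (by linarith)]; ring
      · rw [max_eq_left h1, max_eq_right (by linarith)]; ring
    rw [← mul_sub, hmx]
  have hcpsum : ∀ k, s.length ≤ k → ∑ t ∈ Sit X k, cylProb pt.p s t = 1 := by
    intro k hk
    have e1 : ∑ t ∈ Sit X k, cylProb pt.p s t * (1:ℝ) = pval pt.p (fun _ => (1:ℝ)) (k - s.length) s := by
      have := sum_cylProb_mul (p := pt.p) s (k - s.length) (fun _ => (1:ℝ))
      rwa [show s.length + (k - s.length) = k by omega] at this
    rw [pval_const pt.sum_one] at e1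
    simpa using e1
  have hSle : ∀ k, s.length ≤ k → S k ≤ M s := by
    intro k hk
    have e1 : S k = pval pt.p M (k - s.length) s := by
      have := sum_cylProb_mul (p := pt.p) s (k - s.length) M
      rwa [show s.length + (k - s.length) = k by omega] at this
    rw [e1]
    exact pval_supermart_le hagree hcompat hM _ s
  have hSNle : ∀ k, s.length ≤ k → SN k ≤ C₀ := by
    intro k hk
    calc SN k ≤ ∑ t ∈ Sit X k, cylProb pt.p s t * C₀ := by
          refine Finset.sum_le_sum fun t _ => ?_
          refine mul_le_mul_of_nonneg_left ?_ (cylProb_nonneg pt.nonneg t)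
          apply max_le ?_ (le_max_right _ _)
          calc -M t ≤ -B₀ := by linarith [hB t]
          _ ≤ C₀ := le_max_left _ _
    _ = C₀ := by rw [← Finset.sum_mul, hcpsum k hk, one_mul]
  -- lintegral identities at each level
  have hposk : ∀ k : ℕ, ∫⁻ ω, posPart ((M (prefixList ω k) : ℝ) : EReal) ∂μ
      = ENNReal.ofReal (SP k) := fun k => lintegral_fin_pos pt.nonneg hμ M k
  have hnegk : ∀ k : ℕ, ∫⁻ ω, posPart (-((M (prefixList ω k) : ℝ) : EReal)) ∂μ
      = ENNReal.ofReal (SN k) := by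
    intro k
    have e3 : ∀ ω : Path X, posPart (-((M (prefixList ω k) : ℝ) : EReal))
        = posPart ((((fun t => -M t) (prefixList ω k) : ℝ)) : EReal) := by
      intro ω; rw [← EReal.coe_neg]
    rw [lintegral_congr e3, lintegral_fin_pos pt.nonneg hμ (fun t => -M t) k]
  -- measurability
  have hmeask : ∀ k : ℕ, Measurable (fun ω : Path X => ((M (prefixList ω k) : ℝ) : EReal)) :=
    fun k => measurable_fin_comp (fun t => ((M t : ℝ) : EReal)) k
  -- Fatou for the positive parts
  have hPg : ∫⁻ ω, posPart (gl ω) ∂μ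
      ≤ liminf (fun k => ENNReal.ofReal (SP k)) atTop := by
    calc ∫⁻ ω, posPart (gl ω) ∂μ
        ≤ ∫⁻ ω, liminf (fun k => posPart ((M (prefixList ω k) : ℝ) : EReal)) atTop ∂μ :=
          lintegral_mono fun ω => posPart_liminf_le _
    _ ≤ liminf (fun k => ∫⁻ ω, posPart ((M (prefixList ω k) : ℝ) : EReal) ∂μ) atTop :=
          lintegral_liminf_le fun k => measurable_posPart.comp (hmeask k)
    _ = liminf (fun k => ENNReal.ofReal (SP k)) atTop := by
          congr 1; funext k; exact hposk k
  -- reverse Fatou for the negative parts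
  have hbound : ∀ (k : ℕ) (ω : Path X),
      posPart (-((M (prefixList ω k) : ℝ) : EReal)) ≤ ENNReal.ofReal C₀ := by
    intro k ω
    rw [← EReal.coe_neg]
    apply posPart_le_const
    apply EReal.coe_le_coe_iff.mpr
    calc -M (prefixList ω k) ≤ -B₀ := by linarith [hB (prefixList ω k)]
    _ ≤ C₀ := le_max_left _ _
  have hNg : limsup (fun k => ENNReal.ofReal (SN k)) atTop
      ≤ ∫⁻ ω, posPart (-(gl ω)) ∂μ := by
    have e4 : ∀ ω : Path X, limsup (fun k => posPart (-((M (prefixList ω k) : ℝ) : EReal))) atTop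
        ≤ posPart (-(gl ω)) := by
      intro ω
      have e5 : -(gl ω) = limsup (fun k => -((M (prefixList ω k) : ℝ) : EReal)) atTop := by
        rw [hgl, ereal_limsup_neg]
      rw [e5]
      exact limsup_posPart_le _
    calc limsup (fun k => ENNReal.ofReal (SN k)) atTop
        = limsup (fun k => ∫⁻ ω, posPart (-((M (prefixList ω k) : ℝ) : EReal)) ∂μ) atTop := by
          congr 1; funext k; exact (hnegk k).symm
    _ ≤ ∫⁻ ω, limsup (fun k => posPart (-((M (prefixList ω k) : ℝ) : EReal))) atTop ∂μ := by
          apply limsup_lintegral_le (fun _ => ENNReal.ofReal C₀)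
          · exact fun k => measurable_posPart.comp ((hmeask k).neg)
          · intro k
            exact Filter.Eventually.of_forall (hbound k)
          · rw [lintegral_const, measure_univ, mul_one]
            exact ENNReal.ofReal_ne_top
    _ ≤ ∫⁻ ω, posPart (-(gl ω)) ∂μ := lintegral_mono e4
  -- finiteness bounds
  set A := liminf (fun k => ENNReal.ofReal (SP k)) atTop with hA
  set Bs := limsup (fun k => ENNReal.ofReal (SN k)) atTop with hBs
  set C₁ : ℝ := max (M s + C₀) 0 with hC₁
  have hSPle : ∀ k, s.length ≤ k → SP k ≤ C₁ := by
    intro k hk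
    have := hsplit k
    have h1 := hSle k hk
    have h2 := hSNle k hk
    calc SP k = S k + SN k := by linarith [hsplit k]
    _ ≤ M s + C₀ := by linarith
    _ ≤ C₁ := le_max_left _ _
  have hAle : A ≤ ENNReal.ofReal C₁ := by
    apply liminf_le_of_frequently_le'
    apply Filter.Eventually.frequently
    filter_upwards [eventually_ge_atTop s.length] with k hk
    exact ENNReal.ofReal_le_ofReal (hSPle k hk)
  have hAne : A ≠ ⊤ := fun hh => ENNReal.ofReal_ne_top (top_le_iff.mp (hh ▸ hAle))
  have hBsle : Bs ≤ ENNReal.ofReal C₀ := by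
    apply limsup_le_of_le (by isBoundedDefault)
    filter_upwards [eventually_ge_atTop s.length] with k hk
    exact ENNReal.ofReal_le_ofReal (hSNle k hk)
  have hBsne : Bs ≠ ⊤ := fun hh => ENNReal.ofReal_ne_top (top_le_iff.mp (hh ▸ hBsle))
  -- bound on the integral of -gl
  have hglB : ∀ ω : Path X, ((B₀ : ℝ) : EReal) ≤ gl ω := by
    intro ω
    rw [hgl]
    apply le_liminf_of_le (by isBoundedDefault)
    exact Filter.Eventually.of_forall fun k => EReal.coe_le_coe_iff.mpr (hB _)
  have hNgle : ∫⁻ ω, posPart (-(gl ω)) ∂μ ≤ ENNReal.ofReal C₀ := by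
    calc ∫⁻ ω, posPart (-(gl ω)) ∂μ ≤ ∫⁻ _, ENNReal.ofReal C₀ ∂μ := by
          apply lintegral_mono
          intro ω
          apply posPart_le_const
          rw [show ((C₀ : ℝ) : EReal) = -((-C₀ : ℝ) : EReal) by rw [EReal.coe_neg]; simp]
          apply EReal.neg_le_neg_iff.mpr
          refine le_trans (EReal.coe_le_coe_iff.mpr ?_) (hglB ω)
          have h9 : -B₀ ≤ -B₀ ⊔ 0 := le_max_left _ _
          rw [hC₀]
          linarith
    _ = ENNReal.ofReal C₀ := by rw [lintegral_const, measure_univ, mul_one]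
  have hNgne : ∫⁻ ω, posPart (-(gl ω)) ∂μ ≠ ⊤ :=
    fun hh => ENNReal.ofReal_ne_top (top_le_iff.mp (hh ▸ hNgle))
  have hPgle : ∫⁻ ω, posPart (gl ω) ∂μ ≤ A := hPg
  have hPgne : ∫⁻ ω, posPart (gl ω) ∂μ ≠ ⊤ :=
    fun hh => hAne (top_le_iff.mp (hh ▸ hPgle))
  -- the real inequality
  have hreal : A.toReal - Bs.toReal ≤ M s := by
    apply le_of_forall_pos_le_add
    intro δ hδ
    have hε : (0:ℝ) < δ / 2 := by linarith
    have ev1 : ∀ᶠ k in atTop, A.toReal - δ / 2 ≤ SP k := by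
      by_cases hcase : A.toReal - δ / 2 ≤ 0
      · exact Filter.Eventually.of_forall fun k => hcase.trans (hSPnn k)
      · push_neg at hcase
        have hA0 : 0 < A.toReal := by linarith
        have hlt : ENNReal.ofReal (A.toReal - δ / 2) < A := by
          rw [ENNReal.ofReal_lt_iff_lt_toReal (by linarith) hAne]
          linarith
        filter_upwards [eventually_lt_of_lt_liminf hlt] with k hk
        have := ENNReal.ofReal_le_ofReal_iff (hSPnn k) |>.mp hk.le
        linarith
    have ev2 : ∀ᶠ k in atTop, SN k ≤ Bs.toReal + δ / 2 := by
      have hlt : Bs < Bs + ENNReal.ofReal (δ / 2) :=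
        ENNReal.lt_add_right hBsne (ENNReal.ofReal_pos.mpr hε).ne'
      filter_upwards [eventually_lt_of_limsup_lt hlt] with k hk
      have h6 : SN k ≤ (Bs + ENNReal.ofReal (δ / 2)).toReal := by
        have h7 : ENNReal.ofReal (SN k) ≤ Bs + ENNReal.ofReal (δ / 2) := hk.le
        have h8 := ENNReal.toReal_mono
          (ENNReal.add_ne_top.mpr ⟨hBsne, ENNReal.ofReal_ne_top⟩) h7
        rwa [ENNReal.toReal_ofReal (hSNnn k)] at h8
      rw [ENNReal.toReal_add hBsne ENNReal.ofReal_ne_top,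
        ENNReal.toReal_ofReal hε.le] at h6
      exact h6
    obtain ⟨k, hk1, hk2, hk3⟩ := (ev1.and (ev2.and (eventually_ge_atTop s.length))).exists
    have := hSle k hk3
    have := hsplit k
    linarith
  -- final assembly
  refine step1.trans (step2.le.trans ?_)
  rw [integralE]
  rw [coe_ennreal_eq_coe_toReal hPgne, coe_ennreal_eq_coe_toReal hNgne, ← EReal.coe_sub]
  apply EReal.coe_le_coe_iff.mpr
  have h7 : (∫⁻ ω, posPart (gl ω) ∂μ).toReal ≤ A.toReal := ENNReal.toReal_mono hAne hPgle
  have h8 : Bs.toReal ≤ (∫⁻ ω, posPart (-(gl ω)) ∂μ).toReal := ENNReal.toReal_mono hNgne hNg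
  linarith

end FatouSec
/-! ### Part 9: more helpers and game-theoretic upward continuity -/

section MoreHelpers

variable {p : List X → X → ℝ}

lemma pval_congr {u v : List X → ℝ} :
    ∀ (m : ℕ) (t : List X), (∀ r : List X, r.length = t.length + m → u r = v r) →
      pval p u m t = pval p v m t := by
  intro m
  induction m with
  | zero => intro t h; exact h t (by omega)
  | succ m ih =>
    intro t h
    show ∑ x, p t x * pval p u m (t ++ [x]) = ∑ x, p t x * pval p v m (t ++ [x])
    refine Finset.sum_congr rfl fun x _ => ?_
    rw [ih (t ++ [x]) (fun r hr => h r (by simp at hr; omega))]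

lemma pval_pad_ge (hp1 : ∀ t, ∑ x, p t x = 1) (w : List X → ℝ) (n : ℕ)
    {m m' : ℕ} (hmm' : m ≤ m') {t : List X} (h : n ≤ t.length + m) :
    pval p (fun r => w (r.take n)) m' t = pval p (fun r => w (r.take n)) m t := by
  obtain ⟨d, rfl⟩ := Nat.exists_eq_add_of_le hmm'
  clear hmm'
  induction d with
  | zero => rfl
  | succ d ih =>
    rw [show m + (d+1) = (m + d) + 1 by omega, pval_pad hp1 w n (m+d) t (by omega), ih]

lemma integralE_le_upperInt {μ : Measure (Path X)} {f low : Path X → EReal}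
    (h : ∀ ω, low ω ≤ f ω) : integralE μ low ≤ upperInt μ f := by
  apply le_sInf
  rintro a ⟨g, hg, hb, hfg, rfl⟩
  exact integralE_mono fun ω => (h ω).trans (hfg ω)

lemma ereal_coe_ciSup {g : ℕ → ℝ} {C : ℝ} (hb : ∀ k, g k ≤ C) :
    ((⨆ k, g k : ℝ) : EReal) = ⨆ k, ((g k : ℝ) : EReal) := by
  apply le_antisymm
  · set L := ⨆ k, ((g k : ℝ) : EReal) with hL
    have hLtop : L ≤ (C : EReal) := iSup_le fun k => EReal.coe_le_coe_iff.mpr (hb k)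
    have hLbot : ((g 0 : ℝ) : EReal) ≤ L := le_iSup (fun k => ((g k : ℝ) : EReal)) 0
    have hLt : L ≠ ⊤ := fun hh => by
      rw [hh] at hLtop
      exact EReal.coe_ne_top _ (top_le_iff.mp hLtop)
    have hLb : L ≠ ⊥ := fun hh => by
      rw [hh] at hLbot
      exact EReal.coe_ne_bot _ (le_bot_iff.mp hLbot)
    have h1 : ∀ k, g k ≤ L.toReal := by
      intro k
      have h2 : ((g k : ℝ) : EReal) ≤ L := le_iSup (fun k => ((g k : ℝ) : EReal)) k
      rw [← EReal.coe_toReal hLt hLb] at h2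
      exact EReal.coe_le_coe_iff.mp h2
    calc ((⨆ k, g k : ℝ) : EReal) ≤ ((L.toReal : ℝ) : EReal) :=
          EReal.coe_le_coe_iff.mpr (ciSup_le h1)
    _ = L := EReal.coe_toReal hLt hLb
  · exact iSup_le fun k => EReal.coe_le_coe_iff.mpr (le_ciSup ⟨C, by
      rintro _ ⟨k, rfl⟩; exact hb k⟩ k)

lemma ereal_iSup_inf (a : ℕ → EReal) (c : EReal) :
    ⨆ n, (a n ⊓ c) = (⨆ n, a n) ⊓ c := by
  apply le_antisymm (iSup_le fun n => inf_le_inf_right c (le_iSup a n))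
  rcases le_total (⨆ n, a n) c with h | h
  · calc (⨆ n, a n) ⊓ c ≤ ⨆ n, a n := inf_le_left
    _ ≤ ⨆ n, (a n ⊓ c) := iSup_mono fun n => le_inf le_rfl ((le_iSup a n).trans h)
  · rw [inf_eq_right.mpr h]
    by_contra hd
    push_neg at hd
    have h1 : ∀ n, a n ≤ ⨆ m, (a m ⊓ c) := by
      intro n
      rcases le_total (a n) c with h2 | h2
      · exact le_trans (le_inf le_rfl h2) (le_iSup (fun m => a m ⊓ c) n)
      · exact absurd (le_trans (le_inf h2 le_rfl) (le_iSup (fun m => a m ⊓ c) n))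
          (not_le.mpr hd)
    exact absurd (h.trans (iSup_le h1)) (not_le.mpr hd)

lemma ereal_iInf_sup (a : ℕ → EReal) (c : EReal) :
    ⨅ n, (a n ⊔ c) = (⨅ n, a n) ⊔ c := by
  apply le_antisymm ?_ (le_iInf fun n => sup_le_sup_right (iInf_le a n) c)
  rcases le_total c (⨅ n, a n) with h | h
  · calc ⨅ n, (a n ⊔ c) ≤ ⨅ n, a n := iInf_mono fun n => sup_le le_rfl (h.trans (iInf_le a n))
    _ ≤ (⨅ n, a n) ⊔ c := le_sup_left
  · rw [sup_eq_right.mpr h]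
    by_contra hd
    push_neg at hd
    have h1 : ∀ n, ⨅ m, (a m ⊔ c) ≤ a n := by
      intro n
      rcases le_total c (a n) with h2 | h2
      · exact le_trans (iInf_le (fun m => a m ⊔ c) n) (sup_le le_rfl h2)
      · exact absurd (le_trans (iInf_le (fun m => a m ⊔ c) n) (sup_le h2 le_rfl))
          (not_le.mpr hd)
    exact absurd ((le_iInf h1).trans h) (not_le.mpr hd)

lemma ereal_cut_iSup {a : EReal} {c : ℝ} (ha : (c : EReal) ≤ a) :
    ⨆ m : ℕ, a ⊓ ((c + m : ℝ) : EReal) = a := by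
  apply le_antisymm (iSup_le fun m => inf_le_left)
  rcases eq_or_ne a ⊤ with rfl | hat
  · rw [top_le_iff]
    apply ereal_top_of_forall_le
    intro r
    obtain ⟨m, hm⟩ := exists_nat_ge (r - c)
    refine le_trans ?_ (le_iSup (fun m : ℕ => (⊤ : EReal) ⊓ ((c + (m : ℝ) : ℝ) : EReal)) m)
    rw [top_inf_eq]
    exact EReal.coe_le_coe_iff.mpr (by linarith)
  · have hab : a ≠ ⊥ := fun hh => by
      rw [hh] at ha
      exact EReal.coe_ne_bot c (le_bot_iff.mp ha)
    obtain ⟨m, hm⟩ := exists_nat_ge (a.toReal - c)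
    refine le_trans ?_ (le_iSup (fun m : ℕ => a ⊓ ((c + (m : ℝ) : ℝ) : EReal)) m)
    rw [inf_eq_left.mpr ?_]
    rw [← EReal.coe_toReal hat hab]
    exact EReal.coe_le_coe_iff.mpr (by linarith)

lemma tendsto_mono_iSup {a : ℕ → EReal} {L : EReal} (hmono : Monotone a)
    (h : Tendsto a atTop (nhds L)) : L = ⨆ n, a n :=
  tendsto_nhds_unique h (tendsto_atTop_iSup hmono)

lemma tendsto_anti_iInf {a : ℕ → EReal} {L : EReal} (hanti : Antitone a)
    (h : Tendsto a atTop (nhds L)) : L = ⨅ n, a n :=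
  tendsto_nhds_unique h (tendsto_atTop_iInf hanti)

end MoreHelpers

section GameUpward
variable {Q : UpperExpTree X}

/-- upward continuity of the game-theoretic upper expectation along uniformly
bounded nondecreasing sequences of finitary gambles -/
lemma gtG_le_iSup_Mval {u : ℕ → List X → ℝ} {n : ℕ → ℕ} {C : ℝ} {s : List X}
    (hmono : ∀ k (ω : Path X), u k (prefixList ω (n k)) ≤ u (k+1) (prefixList ω (n (k+1))))
    (hbound : ∀ k (r : List X), |u k (r.take (n k))| ≤ C)
    {h : Path X → ℝ}
    (hlim : ∀ ω : Path X, ((h ω : ℝ) : EReal) = ⨆ k, ((u k (prefixList ω (n k)) : ℝ) : EReal)) :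
    gtG Q h s ≤ ⨆ k, ((Mval Q (u k) (n k) s : ℝ) : EReal) := by
  have hMmono : ∀ k (t : List X), Mval Q (u k) (n k) t ≤ Mval Q (u (k+1)) (n (k+1)) t :=
    fun k => Mval_mono_lvl (hmono k)
  have hMm : ∀ t, Monotone (fun k => Mval Q (u k) (n k) t) := fun t =>
    monotone_nat_of_le_succ (fun k => hMmono k t)
  have hMle : ∀ k t, Mval Q (u k) (n k) t ≤ C := fun k t =>
    Mval_le_of (fun r => (abs_le.mp (hbound k r)).2) t
  have hMge : ∀ k t, -C ≤ Mval Q (u k) (n k) t := fun k t =>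
    Mval_ge_of (fun r => (abs_le.mp (hbound k r)).1) t
  have hbdd : ∀ t : List X, BddAbove (Set.range fun k => Mval Q (u k) (n k) t) := by
    intro t
    exact ⟨C, by rintro _ ⟨k, rfl⟩; exact hMle k t⟩
  set V : List X → ℝ := fun t => ⨆ k, Mval Q (u k) (n k) t with hV
  have hVle : ∀ t, V t ≤ C := fun t => ciSup_le (fun k => hMle k t)
  have hVge : ∀ t, -C ≤ V t := fun t => (hMge 0 t).trans (le_ciSup (hbdd t) 0)
  have hMleV : ∀ k t, Mval Q (u k) (n k) t ≤ V t := fun k t => le_ciSup (hbdd t) k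
  have hVsm : IsSupermart Q V := by
    intro t
    apply le_of_forall_pos_le_add
    intro ε hε
    have hch : ∀ x : X, ∃ k, V (t ++ [x]) - ε < Mval Q (u k) (n k) (t ++ [x]) := by
      intro x
      apply exists_lt_of_lt_ciSup
      have : V (t ++ [x]) - ε < V (t ++ [x]) := by linarith
      exact this
    choose kx hkx using hch
    set K := Finset.sup Finset.univ kx with hK
    have hxK : ∀ x : X, V (t ++ [x]) ≤ Mval Q (u K) (n K) (t ++ [x]) + ε := by
      intro x
      have h1 := hkx x
      have h2 : Mval Q (u (kx x)) (n (kx x)) (t ++ [x]) ≤ Mval Q (u K) (n K) (t ++ [x]) :=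
        hMm (t ++ [x]) (Finset.le_sup (Finset.mem_univ x))
      linarith
    calc Q.Q t (fun x => V (t ++ [x]))
        ≤ Q.Q t (fun x => Mval Q (u K) (n K) (t ++ [x]) + ε) := Qmono t hxK
    _ = Q.Q t (fun x => Mval Q (u K) (n K) (t ++ [x])) + ε := QaddC t _ ε
    _ = Mval Q (u K) (n K) t + ε := by rw [← Mval_fix]
    _ ≤ V t + ε := by have := hMleV K t; linarith
  apply sInf_le
  refine ⟨V, hVsm, ⟨-C, hVge⟩, ?_, ?_⟩
  · intro ω _
    rw [hlim ω]
    apply iSup_le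
    intro k
    apply le_liminf_of_le (by isBoundedDefault)
    filter_upwards [eventually_ge_atTop (n k)] with j hj
    apply EReal.coe_le_coe_iff.mpr
    have h1 : Mval Q (u k) (n k) (prefixList ω j) = u k ((prefixList ω j).take (n k)) :=
      Mval_of_le (by rw [prefixList_length]; exact hj)
    calc u k (prefixList ω (n k)) = Mval Q (u k) (n k) (prefixList ω j) := by
          rw [h1, prefixList_take ω hj]
    _ ≤ V (prefixList ω j) := hMleV k _
  · rw [hV]
    exact (ereal_coe_ciSup (fun k => hMle k s)).symm ▸ rfl

end GameUpward
/-! ### Part 10: compactness of the set of compatible precise trees -/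

section CompactSec

lemma exists_limit_tree (P : ImpreciseTree X) (q : ℕ → PreciseTree X)
    (hq : ∀ j, Compatible (q j) P) :
    ∃ pt : PreciseTree X, Compatible pt P ∧ ∃ φ : ℕ → ℕ, StrictMono φ ∧
      ∀ (t : List X) (x : X), Tendsto (fun j => (q (φ j)).p t x) atTop (nhds (pt.p t x)) := by
  classical
  set K : Set (List X → X → ℝ) := Set.univ.pi (fun t => P.sets t) with hK
  have hcomp_each : ∀ t : List X, IsCompact (P.sets t) := by
    intro t
    apply IsCompact.of_isClosed_subset
      (isCompact_univ_pi (fun _ : X => isCompact_Icc (a := (0:ℝ)) (b := 1)))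
      (P.closed' t)
    intro r hr
    intro x _
    obtain ⟨h0, h1⟩ := P.prob' t r hr
    refine ⟨h0 x, ?_⟩
    calc r x ≤ ∑ y, r y := Finset.single_le_sum (fun y _ => h0 y) (Finset.mem_univ x)
    _ = 1 := h1
  have hKc : IsCompact K := isCompact_univ_pi hcomp_each
  have hmem : ∀ j, (q j).p ∈ K := fun j t _ => hq j t
  obtain ⟨a, haK, φ, hφ, hconv⟩ := hKc.tendsto_subseq hmem
  have hamem : ∀ t, a t ∈ P.sets t := fun t => haK t (Set.mem_univ t)
  refine ⟨⟨a, fun t x => (P.prob' t (a t) (hamem t)).1 x,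
    fun t => (P.prob' t (a t) (hamem t)).2⟩, fun t => hamem t, φ, hφ, ?_⟩
  intro t x
  have h1 := tendsto_pi_nhds.mp hconv t
  exact tendsto_pi_nhds.mp h1 x

lemma pval_tendsto (u : List X → ℝ) {q : ℕ → List X → X → ℝ} {a : List X → X → ℝ}
    (hconv : ∀ (t : List X) (x : X), Tendsto (fun j => q j t x) atTop (nhds (a t x))) :
    ∀ (m : ℕ) (t : List X),
      Tendsto (fun j => pval (q j) u m t) atTop (nhds (pval a u m t)) := by
  intro m
  induction m with
  | zero => intro t; exact tendsto_const_nhds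
  | succ m ih =>
    intro t
    show Tendsto (fun j => ∑ x, q j t x * pval (q j) u m (t ++ [x])) atTop
      (nhds (∑ x, a t x * pval a u m (t ++ [x])))
    exact tendsto_finset_sum _ (fun x _ => (hconv t x).mul (ih (t ++ [x])))

end CompactSec
/-! ### Part 11: the measure-theoretic upper expectation is dominated by the game-theoretic one -/

section MainIneq
variable {P : ImpreciseTree X} {Q : UpperExpTree X}

lemma muUE_le_gtUE (hagree : Agree P Q)
    (Pm : PreciseTree X → List X → Measure (Path X))
    (hPm : ∀ (p : PreciseTree X) (s : List X), IsTreeMeasure p s (Pm p s))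
    (s : List X) {f : Path X → EReal} (hf : Measurable f) :
    muUE Pm P f s ≤ gtUE Q f s := by
  rw [muUE, gtUE]
  apply iSup₂_le
  intro pt hcompat
  apply le_iInf
  intro c
  obtain ⟨hprob, hcyl⟩ := hPm pt s
  haveI := hprob
  have hfc : Measurable (fun ω => f ω ⊔ (c : EReal)) := hf.sup measurable_const
  have h1 : upperInt (Pm pt s) f ≤ integralE (Pm pt s) (fun ω => f ω ⊔ (c : EReal)) := by
    rw [upperInt_cuts hf]
    exact iInf_le _ c
  have h2 : integralE (Pm pt s) (fun ω => f ω ⊔ (c : EReal))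
      = ⨆ m : ℕ, integralE (Pm pt s)
          (fun ω => (f ω ⊔ (c : EReal)) ⊓ ((c + (m : ℝ) : ℝ) : EReal)) := by
    have e1 : (fun ω => f ω ⊔ (c : EReal))
        = (fun ω => ⨆ m : ℕ, ((f ω ⊔ (c : EReal)) ⊓ ((c + (m : ℝ) : ℝ) : EReal))) :=
      funext fun ω => (ereal_cut_iSup le_sup_right).symm
    rw [e1]
    refine integralE_iSup (fun m => hfc.inf measurable_const) ?_ (B := c) ?_
    · intro m ω
      refine inf_le_inf_left _ (EReal.coe_le_coe_iff.mpr ?_)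
      push_cast; linarith
    · intro m ω
      refine le_inf le_sup_right (EReal.coe_le_coe_iff.mpr ?_)
      have : (0:ℝ) ≤ (m : ℝ) := Nat.cast_nonneg m
      linarith
  have h3 : ∀ m : ℕ, integralE (Pm pt s)
        (fun ω => (f ω ⊔ (c : EReal)) ⊓ ((c + (m : ℝ) : ℝ) : EReal))
      ≤ gtG Q (fun ω => ((f ω ⊔ (c : EReal)) ⊓ ((c + (m : ℝ) : ℝ) : EReal)).toReal) s := by
    intro m
    apply le_sInf
    rintro a ⟨M, hM, ⟨B₀, hB₀⟩, hlim, rfl⟩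
    have hfun : (fun ω => (f ω ⊔ (c : EReal)) ⊓ ((c + (m : ℝ) : ℝ) : EReal))
        = fun ω => ((((f ω ⊔ (c : EReal)) ⊓ ((c + (m : ℝ) : ℝ) : EReal)).toReal : ℝ) : EReal) := by
      funext ω
      refine (EReal.coe_toReal ?_ ?_).symm
      · exact ne_top_of_le_ne_top (EReal.coe_ne_top _) inf_le_right
      · refine ne_bot_of_le_ne_bot (EReal.coe_ne_bot (min c (c + (m : ℝ)))) ?_
        refine le_inf ?_ ?_
        · exact le_trans (EReal.coe_le_coe_iff.mpr (min_le_left _ _)) le_sup_right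
        · exact EReal.coe_le_coe_iff.mpr (min_le_right _ _)
    rw [hfun]
    exact fatou_key hagree hcompat hprob hcyl hM hB₀ hlim
  refine h1.trans (h2 ▸ iSup_le fun m => (h3 m).trans ?_)
  rw [gtBB]
  exact le_iSup (fun c' : ℝ =>
    gtG Q (fun ω => ((f ω ⊔ (c : EReal)) ⊓ ((c' : ℝ) : EReal)).toReal) s) (c + (m : ℝ))

end MainIneq
/-! ### STATEMENT 8 -/
theorem stmt8 (P : ImpreciseTree X) (Q : UpperExpTree X)
    (Pm : PreciseTree X → List X → Measure (Path X))
    (hPm : ∀ (p : PreciseTree X) (s : List X), IsTreeMeasure p s (Pm p s))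
    (hagree : Agree P Q) (s : List X) (f : Path X → EReal)
    (h : ∃ fn : ℕ → Path X → EReal, (∀ n, IsFinGamble (fn n)) ∧
      (Monotone fn ∨ Antitone fn) ∧
      ∀ ω, Tendsto (fun n => fn n ω) atTop (nhds (f ω))) :
    muUE Pm P f s = gtUE Q f s := by
  classical
  obtain ⟨fn, hfin, hmo, hlim⟩ := h
  choose nn hnn using fun k => (hfin k).1
  choose Bn hBn using fun k => (hfin k).2
  -- measurability of the fn and of f
  have hfnfac : ∀ k (ω : Path X), fn k ω = fn k (ext0 (prefixList ω (nn k))) := by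
    intro k ω
    apply hnn k ω (ext0 (prefixList ω (nn k)))
    have h1 := prefixList_ext0_self (prefixList ω (nn k))
    rw [prefixList_length] at h1
    exact h1.symm
  have hfnmeas : ∀ k, Measurable (fn k) := by
    intro k
    have h2 := measurable_fin_comp (fun t => fn k (ext0 t)) (nn k)
    have h3 : fn k = fun ω => fn k (ext0 (prefixList ω (nn k))) := funext (hfnfac k)
    rw [h3]
    exact h2
  have hfmeas : Measurable f := by
    have e : f = fun ω => ⨆ n, ⨅ i, ⨅ (_ : i ≥ n), fn i ω := by
      funext ω
      rw [← liminf_eq_iSup_iInf_of_nat, (hlim ω).liminf_eq]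
    rw [e]
    exact Measurable.iSup fun n => Measurable.iInf fun i => Measurable.iInf fun _ => hfnmeas i
  have hmain := muUE_le_gtUE hagree Pm hPm s hfmeas
  rcases hmo with hmono | hanti
  · -- ====== MONOTONE CASE ======
    have hmonoptw : ∀ ω, Monotone fun k => fn k ω := fun ω k l hkl => (hmono hkl) ω
    have hfsup : ∀ ω, f ω = ⨆ k, fn k ω := fun ω => tendsto_mono_iSup (hmonoptw ω) (hlim ω)
    set B0 := Bn 0 with hB0def
    have hlow : ∀ k (ω : Path X), ((-B0 : ℝ) : EReal) ≤ fn k ω := by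
      intro k ω
      rw [EReal.coe_neg]
      exact (hBn 0 ω).1.trans (hmonoptw ω (Nat.zero_le k))
    have hf0 : ∀ ω, ((-B0 : ℝ) : EReal) ≤ f ω := fun ω =>
      (hlow 0 ω).trans (by rw [hfsup ω]; exact le_iSup (fun k => fn k ω) 0)
    apply le_antisymm hmain
    calc gtUE Q f s ≤ gtBB Q (fun ω => f ω ⊔ ((-B0 : ℝ) : EReal)) s := iInf_le _ (-B0)
    _ ≤ muUE Pm P f s := by
        rw [show (fun ω => f ω ⊔ ((-B0 : ℝ) : EReal)) = f from
          funext fun ω => sup_eq_left.mpr (hf0 ω)]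
        rw [gtBB]
        apply iSup_le
        intro c
        set C : ℝ := max B0 |c| with hC
        set u : ℕ → List X → ℝ := fun k t => ((fn k (ext0 t)) ⊓ (c : EReal)).toReal with hu
        have hne : ∀ k (ω' : Path X),
            fn k ω' ⊓ (c : EReal) ≠ ⊤ ∧ fn k ω' ⊓ (c : EReal) ≠ ⊥ := by
          intro k ω'
          constructor
          · exact ne_top_of_le_ne_top (EReal.coe_ne_top c) inf_le_right
          · refine ne_bot_of_le_ne_bot (EReal.coe_ne_bot (min (-B0) c)) ?_
            exact le_inf ((EReal.coe_le_coe_iff.mpr (min_le_left _ _)).trans (hlow k ω'))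
              (EReal.coe_le_coe_iff.mpr (min_le_right _ _))
        have hbnd : ∀ k (ω' : Path X),
            ((-C : ℝ) : EReal) ≤ fn k ω' ⊓ (c : EReal) ∧
              fn k ω' ⊓ (c : EReal) ≤ ((C : ℝ) : EReal) := by
          intro k ω'
          constructor
          · refine le_inf ?_ ?_
            · refine le_trans (EReal.coe_le_coe_iff.mpr ?_) (hlow k ω')
              have := le_max_left B0 |c|; linarith
            · apply EReal.coe_le_coe_iff.mpr
              have h4 := le_max_right B0 |c|
              have h5 := neg_abs_le c
              linarith
          · refine inf_le_right.trans (EReal.coe_le_coe_iff.mpr ?_)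
            have h4 := le_max_right B0 |c|
            have h5 := le_abs_self c
            linarith
        have hval : ∀ k (ω : Path X),
            u k (prefixList ω (nn k)) = ((fn k ω) ⊓ (c : EReal)).toReal := by
          intro k ω
          rw [hu]
          show ((fn k (ext0 (prefixList ω (nn k)))) ⊓ (c : EReal)).toReal = _
          rw [← hfnfac k ω]
        have hcoeval : ∀ k (ω : Path X),
            ((u k (prefixList ω (nn k)) : ℝ) : EReal) = (fn k ω) ⊓ (c : EReal) := by
          intro k ω
          rw [hval k ω]
          exact EReal.coe_toReal (hne k ω).1 (hne k ω).2
        have hG3 := gtG_le_iSup_Mval (Q := Q) (u := u) (n := nn) (C := C) (s := s)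
          (h := fun ω => (f ω ⊓ (c : EReal)).toReal) ?hmono ?hbound ?hlim
        case hmono =>
          intro k ω
          rw [hval k ω, hval (k+1) ω]
          apply EReal.toReal_le_toReal _ (hne k ω).2 (hne (k+1) ω).1
          exact inf_le_inf_right _ ((hmono (Nat.le_succ k)) ω)
        case hbound =>
          intro k r
          rw [hu]
          show |((fn k (ext0 (r.take (nn k)))) ⊓ (c : EReal)).toReal| ≤ C
          set x := (fn k (ext0 (r.take (nn k)))) ⊓ (c : EReal)
          rw [abs_le]
          constructor
          · have h6 := (hbnd k (ext0 (r.take (nn k)))).1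
            have := EReal.toReal_le_toReal h6 (EReal.coe_ne_bot _) (hne k _).1
            simpa using this
          · have h6 := (hbnd k (ext0 (r.take (nn k)))).2
            have := EReal.toReal_le_toReal h6 (hne k _).2 (EReal.coe_ne_top _)
            simpa using this
        case hlim =>
          intro ω
          have hfc_ne : f ω ⊓ (c : EReal) ≠ ⊤ ∧ f ω ⊓ (c : EReal) ≠ ⊥ := by
            constructor
            · exact ne_top_of_le_ne_top (EReal.coe_ne_top c) inf_le_right
            · refine ne_bot_of_le_ne_bot (EReal.coe_ne_bot (min (-B0) c)) ?_
              exact le_inf ((EReal.coe_le_coe_iff.mpr (min_le_left _ _)).trans (hf0 ω))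
                (EReal.coe_le_coe_iff.mpr (min_le_right _ _))
          rw [EReal.coe_toReal hfc_ne.1 hfc_ne.2]
          have e7 : ∀ k : ℕ, ((u k (prefixList ω (nn k)) : ℝ) : EReal)
              = (fn k ω) ⊓ (c : EReal) := hcoeval (ω := ω)
          rw [show (fun k => ((u k (prefixList ω (nn k)) : ℝ) : EReal))
            = fun k => (fn k ω) ⊓ (c : EReal) from funext e7]
          rw [ereal_iSup_inf, ← hfsup ω]
        refine hG3.trans (iSup_le fun k => ?_)
        -- coe (Mval Q (u k) (nn k) s) ≤ muUE
        set N := max (nn k) s.length with hN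
        set u' : List X → ℝ := fun r => u k (r.take (nn k)) with hu'
        have hagree2 : ∀ ω : Path X, u k (prefixList ω (nn k)) = u' (prefixList ω N) := by
          intro ω
          rw [hu']
          show _ = u k ((prefixList ω N).take (nn k))
          rw [prefixList_take ω (le_max_left _ _)]
        have hMeq : Mval Q (u k) (nn k) s = Mval Q u' N s := by
          apply le_antisymm
          · exact Mval_mono_lvl (fun ω => (hagree2 ω).le) s
          · exact Mval_mono_lvl (fun ω => (hagree2 ω).ge) s
        apply ereal_le_of_forall_eps
        intro ε hε
        have hε' : (0:ℝ) < ε / ((N : ℝ) + 1) := by positivity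
        obtain ⟨pt, hcompat, hle⟩ := exists_nearopt_tree hagree s u' N (le_max_right _ _) hε'
        obtain ⟨hprob, hcyl⟩ := hPm pt s
        have hpc : pval pt.p (fun r => u' (r.take N)) (N - s.length) s
            = pval pt.p u' (N - s.length) s := by
          apply pval_congr
          intro r hr
          have hrN : r.length = N := by omega
          rw [← hrN, List.take_length]
        have hsum : ((pval pt.p u' (N - s.length) s : ℝ) : EReal)
            = integralE (Pm pt s) (fun ω => ((u' (prefixList ω N) : ℝ) : EReal)) := by
          rw [integralE_fin pt.nonneg hcyl u' N]
          apply congrArg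
          have h8 := sum_cylProb_mul (p := pt.p) s (N - s.length) u'
          rw [show s.length + (N - s.length) = N by omega] at h8
          exact h8.symm
        have hdom : ∀ ω : Path X, ((u' (prefixList ω N) : ℝ) : EReal) ≤ f ω := by
          intro ω
          rw [← hagree2 ω, hcoeval k ω]
          exact inf_le_left.trans (by rw [hfsup ω]; exact le_iSup (fun k => fn k ω) k)
        have herr : ((N - s.length : ℕ) : ℝ) * (ε / ((N : ℝ) + 1)) ≤ ε := by
          have h9 : ((N - s.length : ℕ) : ℝ) ≤ (N : ℝ) + 1 := by
            have := (Nat.cast_le (α := ℝ)).mpr (show N - s.length ≤ N + 1 by omega)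
            push_cast at this
            linarith
          calc ((N - s.length : ℕ) : ℝ) * (ε / ((N : ℝ) + 1))
              ≤ ((N : ℝ) + 1) * (ε / ((N : ℝ) + 1)) :=
                mul_le_mul_of_nonneg_right h9 (by positivity)
          _ = ε := by field_simp
        calc ((Mval Q (u k) (nn k) s : ℝ) : EReal)
            = ((Mval Q u' N s : ℝ) : EReal) := by rw [hMeq]
        _ ≤ ((pval pt.p (fun r => u' (r.take N)) (N - s.length) s
              + ((N - s.length : ℕ) : ℝ) * (ε / ((N : ℝ) + 1)) : ℝ) : EReal) := by
            apply EReal.coe_le_coe_iff.mpr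
            rw [Nat.cast_sub (le_max_right (nn k) s.length)]
            exact hle
        _ = ((pval pt.p u' (N - s.length) s : ℝ) : EReal)
              + (((N - s.length : ℕ) : ℝ) * (ε / ((N : ℝ) + 1)) : ℝ) := by
            rw [← EReal.coe_add, hpc]
        _ ≤ muUE Pm P f s + (ε : EReal) := by
            apply add_le_add
            · rw [hsum]
              refine le_trans (integralE_le_upperInt hdom) ?_
              exact le_iSup₂ (f := fun p (_ : Compatible p P) => upperInt (Pm p s) f)
                pt hcompat
            · exact EReal.coe_le_coe_iff.mpr herr
  · -- ====== ANTITONE CASE ======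
    have hantiptw : ∀ ω, Antitone fun k => fn k ω := fun ω k l hkl => (hanti hkl) ω
    have hfinf : ∀ ω, f ω = ⨅ k, fn k ω := fun ω => tendsto_anti_iInf (hantiptw ω) (hlim ω)
    set B0 := Bn 0 with hB0def
    have hub : ∀ k (ω : Path X), fn k ω ≤ ((B0 : ℝ) : EReal) := fun k ω =>
      (hantiptw ω (Nat.zero_le k)).trans (hBn 0 ω).2
    set u : ℕ → List X → ℝ :=
      fun m t => ((fn m (ext0 t)) ⊔ ((-(m : ℝ) : ℝ) : EReal)).toReal with hu
    have hne : ∀ m (ω' : Path X), fn m ω' ⊔ ((-(m:ℝ):ℝ) : EReal) ≠ ⊤ ∧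
        fn m ω' ⊔ ((-(m:ℝ):ℝ) : EReal) ≠ ⊥ := by
      intro m ω'
      constructor
      · refine ne_top_of_le_ne_top (EReal.coe_ne_top (max B0 (-(m:ℝ)))) ?_
        exact sup_le ((hub m ω').trans (EReal.coe_le_coe_iff.mpr (le_max_left _ _)))
          (EReal.coe_le_coe_iff.mpr (le_max_right _ _))
      · exact ne_bot_of_le_ne_bot (EReal.coe_ne_bot _) le_sup_right
    have hval : ∀ m (ω : Path X),
        u m (prefixList ω (nn m)) = ((fn m ω) ⊔ ((-(m:ℝ):ℝ) : EReal)).toReal := by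
      intro m ω
      rw [hu]
      show ((fn m (ext0 (prefixList ω (nn m)))) ⊔ _).toReal = _
      rw [← hfnfac m ω]
    have hcoeval : ∀ m (ω : Path X),
        ((u m (prefixList ω (nn m)) : ℝ) : EReal) = (fn m ω) ⊔ ((-(m:ℝ):ℝ) : EReal) := by
      intro m ω
      rw [hval m ω]
      exact EReal.coe_toReal (hne m ω).1 (hne m ω).2
    set J : EReal := ⨅ m, ((Mval Q (u m) (nn m) s : ℝ) : EReal) with hJ
    have hclaim1 : gtUE Q f s ≤ J := by
      apply le_iInf
      intro m
      calc gtUE Q f s ≤ gtBB Q (fun ω => f ω ⊔ ((-(m:ℝ) : ℝ) : EReal)) s :=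
            iInf_le _ (-(m:ℝ))
      _ ≤ ((Mval Q (u m) (nn m) s : ℝ) : EReal) := by
          rw [gtBB]
          apply iSup_le
          intro c'
          have hmono2 : ∀ ω : Path X,
              ((f ω ⊔ ((-(m:ℝ):ℝ) : EReal)) ⊓ ((c' : ℝ) : EReal)).toReal
                ≤ u m (prefixList ω (nn m)) := by
            intro ω
            rw [hval m ω]
            apply EReal.toReal_le_toReal _ ?_ (hne m ω).1
            · refine inf_le_left.trans (sup_le_sup_right ?_ _)
              rw [hfinf ω]; exact iInf_le (fun k => fn k ω) m
            · refine ne_bot_of_le_ne_bot (EReal.coe_ne_bot (min (-(m:ℝ)) c')) ?_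
              exact le_inf ((EReal.coe_le_coe_iff.mpr (min_le_left _ _)).trans le_sup_right)
                (EReal.coe_le_coe_iff.mpr (min_le_right _ _))
          refine (gtG_mono hmono2).trans ?_
          apply gtG_le_Mval (-(m:ℝ))
          intro r
          rw [hu]
          show -(m:ℝ) ≤ ((fn m (ext0 (r.take (nn m)))) ⊔ ((-(m:ℝ):ℝ) : EReal)).toReal
          have h1 : ((-(m:ℝ) : ℝ) : EReal)
              ≤ (fn m (ext0 (r.take (nn m)))) ⊔ ((-(m:ℝ):ℝ) : EReal) := le_sup_right
          have h2 := EReal.toReal_le_toReal h1 (EReal.coe_ne_bot _) (hne m _).1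
          rwa [EReal.toReal_coe] at h2
    have hclaim2 : J ≤ muUE Pm P f s := by
      rcases eq_or_ne J ⊥ with hJb | hJb
      · rw [hJb]; exact bot_le
      have hJt : J ≠ ⊤ := by
        intro hh
        have h1 : J ≤ ((Mval Q (u 0) (nn 0) s : ℝ) : EReal) :=
          iInf_le (fun m => ((Mval Q (u m) (nn m) s : ℝ) : EReal)) 0
        rw [hh] at h1
        exact EReal.coe_ne_top _ (top_le_iff.mp h1)
      set Jr := J.toReal with hJrdef
      have hJr : J = ((Jr : ℝ) : EReal) := (EReal.coe_toReal hJt hJb).symm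
      suffices hsuf : ∀ ε : ℝ, 0 < ε → ((Jr - ε : ℝ) : EReal) ≤ muUE Pm P f s by
        rw [hJr]
        apply ereal_le_of_forall_eps
        intro ε hε
        calc ((Jr : ℝ) : EReal) = ((Jr - ε : ℝ) : EReal) + ((ε : ℝ) : EReal) := by
              rw [← EReal.coe_add]; ring_nf
        _ ≤ muUE Pm P f s + (ε : EReal) := add_le_add (hsuf ε hε) le_rfl
      intro ε hε
      set N : ℕ → ℕ := fun m => max (nn m) s.length with hN
      set u' : ℕ → List X → ℝ := fun m r => u m (r.take (nn m)) with hu'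
      have hsN : ∀ m, s.length ≤ N m := fun m => le_max_right _ _
      have hnN : ∀ m, nn m ≤ N m := fun m => le_max_left _ _
      have hagree2 : ∀ m (ω : Path X),
          u m (prefixList ω (nn m)) = u' m (prefixList ω (N m)) := by
        intro m ω
        rw [hu']
        show _ = u m ((prefixList ω (N m)).take (nn m))
        rw [prefixList_take ω (hnN m)]
      have hMeq : ∀ m, Mval Q (u m) (nn m) s = Mval Q (u' m) (N m) s := by
        intro m
        apply le_antisymm
        · exact Mval_mono_lvl (fun ω => (hagree2 m ω).le) s
        · exact Mval_mono_lvl (fun ω => (hagree2 m ω).ge) s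
      have hJle : ∀ m, Jr ≤ Mval Q (u m) (nn m) s := by
        intro m
        have h1 : J ≤ ((Mval Q (u m) (nn m) s : ℝ) : EReal) :=
          iInf_le (fun m => ((Mval Q (u m) (nn m) s : ℝ) : EReal)) m
        rw [hJr] at h1
        exact EReal.coe_le_coe_iff.mp h1
      choose q hqc hqle using fun m => exists_nearopt_tree hagree s (u' m) (N m)
        (hsN m) (show (0:ℝ) < ε / ((N m : ℝ) + 1) by positivity)
      have hqle' : ∀ m, Mval Q (u' m) (N m) s - ε
          ≤ pval (q m).p (fun r => u' m (r.take (N m))) (N m - s.length) s := by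
        intro m
        have h1 := hqle m
        have herr : ((N m : ℝ) - (s.length : ℝ)) * (ε / ((N m : ℝ) + 1)) ≤ ε := by
          have h9 : ((N m : ℝ) - (s.length : ℝ)) ≤ (N m : ℝ) + 1 := by
            have h10 : (0:ℝ) ≤ (s.length : ℝ) := Nat.cast_nonneg _
            linarith
          have h10 : (0:ℝ) ≤ (N m : ℝ) - (s.length : ℝ) := by
            have h11 := (Nat.cast_le (α := ℝ)).mpr (hsN m)
            linarith
          calc ((N m : ℝ) - (s.length : ℝ)) * (ε / ((N m : ℝ) + 1))
              ≤ ((N m : ℝ) + 1) * (ε / ((N m : ℝ) + 1)) :=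
                mul_le_mul_of_nonneg_right h9 (by positivity)
          _ = ε := by field_simp
        linarith
      set gv : ℕ → List X → ℝ :=
        fun i r => ((fn i (ext0 r)) ⊔ ((-(i:ℝ) : ℝ) : EReal)).toReal with hgv
      have hvcongr : ∀ i (r : List X), nn i ≤ r.length → u' i r = gv i r := by
        intro i r hr
        have e1 : prefixList (ext0 (r.take (nn i))) (nn i) = r.take (nn i) := by
          have h2 := prefixList_ext0_self (r.take (nn i))
          rwa [List.length_take, min_eq_left hr] at h2
        have e2 : prefixList (ext0 r) (nn i) = r.take (nn i) := prefixList_ext0 hr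
        have e3 : fn i (ext0 (r.take (nn i))) = fn i (ext0 r) :=
          hnn i _ _ (by rw [e1, e2])
        show ((fn i (ext0 (r.take (nn i)))) ⊔ _).toReal = ((fn i (ext0 r)) ⊔ _).toReal
        rw [e3]
      obtain ⟨pt, hptc, φ, hφ, hconv⟩ := exists_limit_tree P q hqc
      have hkey : ∀ m, Jr - ε ≤ pval pt.p (u' m) (N m - s.length) s := by
        intro m
        apply ge_of_tendsto (pval_tendsto (u' m) hconv (N m - s.length) s)
        filter_upwards [hφ.tendsto_atTop.eventually_ge_atTop m] with j hj
        set pj := (q (φ j)).p with hpj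
        set L := max (N m) (N (φ j)) with hL
        have hpad : ∀ i, N i ≤ L →
            pval pj (u' i) (L - s.length) s = pval pj (u' i) (N i - s.length) s := by
          intro i hi
          have h3 : nn i ≤ s.length + (N i - s.length) := by
            have h4 := hnN i
            have h5 := hsN i
            omega
          exact pval_pad_ge (q (φ j)).sum_one (u i) (nn i)
            (by have := hsN i; omega) h3
        have hcongr : ∀ i, N i ≤ L →
            pval pj (u' i) (L - s.length) s = pval pj (gv i) (L - s.length) s := by
          intro i hi
          apply pval_congr
          intro r hr
          apply hvcongr
          have h4 := hnN i
          have h5 := hsN m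
          have h6 := hsN (φ j)
          have h7 : s.length ≤ L := le_trans h5 (le_max_left _ _)
          omega
        have hmono3 : ∀ r : List X, gv (φ j) r ≤ gv m r := by
          intro r
          apply EReal.toReal_le_toReal _ ?_ ?_
          · refine sup_le_sup ((hantiptw (ext0 r)) hj) (EReal.coe_le_coe_iff.mpr ?_)
            have := (Nat.cast_le (α := ℝ)).mpr hj
            linarith
          · exact ne_bot_of_le_ne_bot (EReal.coe_ne_bot _) le_sup_right
          · exact (hne m (ext0 r)).1
        calc Jr - ε ≤ Mval Q (u' (φ j)) (N (φ j)) s - ε := by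
              have h8 := hJle (φ j)
              rw [hMeq (φ j)] at h8
              linarith
        _ ≤ pval pj (fun r => u' (φ j) (r.take (N (φ j)))) (N (φ j) - s.length) s :=
              hqle' (φ j)
        _ = pval pj (u' (φ j)) (N (φ j) - s.length) s := by
              apply pval_congr
              intro r hr
              have hrN : r.length = N (φ j) := by
                have := hsN (φ j); omega
              rw [← hrN, List.take_length]
        _ = pval pj (gv (φ j)) (L - s.length) s := by
              rw [← hpad (φ j) (le_max_right _ _), hcongr (φ j) (le_max_right _ _)]
        _ ≤ pval pj (gv m) (L - s.length) s :=
              pval_mono (q (φ j)).nonneg hmono3 _ s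
        _ = pval pj (u' m) (N m - s.length) s := by
              rw [← hcongr m (le_max_left _ _), hpad m (le_max_left _ _)]
      obtain ⟨hprob, hcyl⟩ := hPm pt s
      haveI := hprob
      have hup : ((Jr - ε : ℝ) : EReal) ≤ upperInt (Pm pt s) f := by
        rw [upperInt_cuts hfmeas]
        apply le_iInf
        intro c
        obtain ⟨m0, hm0⟩ := exists_nat_ge (-c)
        have hint : integralE (Pm pt s) (fun ω => f ω ⊔ ((-(m0:ℝ) : ℝ) : EReal))
            ≤ integralE (Pm pt s) (fun ω => f ω ⊔ (c : EReal)) :=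
          integralE_mono fun ω => sup_le_sup_left (EReal.coe_le_coe_iff.mpr (by linarith)) _
        refine le_trans ?_ hint
        have hdct : integralE (Pm pt s) (fun ω => f ω ⊔ ((-(m0:ℝ) : ℝ) : EReal))
            = ⨅ k, integralE (Pm pt s) (fun ω => fn k ω ⊔ ((-(m0:ℝ) : ℝ) : EReal)) := by
          rw [show (fun ω => f ω ⊔ ((-(m0:ℝ) : ℝ) : EReal))
              = fun ω => ⨅ k, (fn k ω ⊔ ((-(m0:ℝ) : ℝ) : EReal)) from funext fun ω => by
            rw [ereal_iInf_sup, ← hfinf ω]]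
          exact integralE_iInf (fun k => (hfnmeas k).sup measurable_const)
            (fun k ω => sup_le_sup_right ((hantiptw ω) (Nat.le_succ k)) _)
            (B := -(m0:ℝ)) (fun k ω => le_sup_right)
            (C := max B0 (-(m0:ℝ))) (fun k ω => sup_le
              ((hub k ω).trans (EReal.coe_le_coe_iff.mpr (le_max_left _ _)))
              (EReal.coe_le_coe_iff.mpr (le_max_right _ _)))
        rw [hdct]
        apply le_iInf
        intro k
        set K := max k m0 with hK
        have h5 : ∀ ω : Path X, ((u' K (prefixList ω (N K)) : ℝ) : EReal)
            ≤ fn k ω ⊔ ((-(m0:ℝ) : ℝ) : EReal) := by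
          intro ω
          rw [← hagree2 K ω, hcoeval K ω]
          apply sup_le_sup
          · exact (hantiptw ω) (le_max_left _ _)
          · apply EReal.coe_le_coe_iff.mpr
            have h9 := (Nat.cast_le (α := ℝ)).mpr (le_max_right k m0)
            have h10 : ((m0 : ℕ) : ℝ) ≤ (K : ℝ) := h9
            linarith
        have h6 : ((pval pt.p (u' K) (N K - s.length) s : ℝ) : EReal)
            = integralE (Pm pt s) (fun ω => ((u' K (prefixList ω (N K)) : ℝ) : EReal)) := by
          rw [integralE_fin pt.nonneg hcyl (u' K) (N K)]
          apply congrArg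
          have h8 := sum_cylProb_mul (p := pt.p) s (N K - s.length) (u' K)
          rw [show s.length + (N K - s.length) = N K by
            have := hsN K; omega] at h8
          exact h8.symm
        calc ((Jr - ε : ℝ) : EReal)
            ≤ ((pval pt.p (u' K) (N K - s.length) s : ℝ) : EReal) :=
              EReal.coe_le_coe_iff.mpr (hkey K)
        _ = integralE (Pm pt s) (fun ω => ((u' K (prefixList ω (N K)) : ℝ) : EReal)) := h6
        _ ≤ integralE (Pm pt s) (fun ω => fn k ω ⊔ ((-(m0:ℝ) : ℝ) : EReal)) :=
              integralE_mono h5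
      exact hup.trans (le_iSup₂ (f := fun p (_ : Compatible p P) => upperInt (Pm p s) f) pt hptc)
    exact le_antisymm hmain (hclaim1.trans hclaim2)

end UEPaper
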